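/- arXiv:1005.1369 — 5 statements merged into one kernel-verified Lean document; each statement's English description precedes it below -/
import Mathlib

section
/- Let Σ = {σ_0, σ_1, σ_2} be an alphabet of three letters, let G_1 be the graph on Σ with edge set {σ_0σ_1, σ_0σ_2} (user 1 only distinguishes between σ_1 and σ_2), and let G_2 be any graph on Σ other than the complete graph. Then for every α ∈ [0,1] the rate vector (α, (1−α)·log₂ c(G_2)) is optimal (note log₂ c(G_1) = 1). -/
/-- Two strings of length `n` over the alphabet are distinguishable for a user with
confusion graph `G` if they differ at some coordinate at two non-adjacent letters. -/
def Distinguishable {V : Type*} (G : SimpleGraph V) {n : ℕ} (x y : Fin n → V) : Prop :=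
  ∃ t : Fin n, x t ≠ y t ∧ ¬ G.Adj (x t) (y t)

/-- `alphaN G n` is the largest size of a family of strings in `V^n` that are pairwise
distinguishable (the independence number of the `n`-fold strong product of `G`). -/
noncomputable def alphaN {V : Type*} [Fintype V] (G : SimpleGraph V) (n : ℕ) : ℕ :=
  sSup {N : ℕ | ∃ S : Finset (Fin n → V), S.card = N ∧
    ∀ x ∈ S, ∀ y ∈ S, x ≠ y → Distinguishable G x y}

/-- The Shannon capacity of a confusion graph: `c(G) = sup_{n ≥ 1} α_n(G)^{1/n}`. -/
noncomputable def shannonCapacity {V : Type*} [Fintype V] (G : SimpleGraph V) : ℝ :=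
  ⨆ n : ℕ, (alphaN G (n + 1) : ℝ) ^ (((n : ℝ) + 1))⁻¹

/-- `(m 1, …, m r)` is feasible at length `n` for the confusion graphs `G i` if there is an
encoding map `E` such that any two message tuples differing in the `i`-th component get codewords
that are distinguishable for user `i` (so user `i` can decode his own message). -/
def FeasibleAtLength {k r : ℕ} (G : Fin r → SimpleGraph (Fin k)) (m : Fin r → ℕ) (n : ℕ) :
    Prop :=
  ∃ E : (∀ i : Fin r, Fin (m i)) → (Fin n → Fin k),
    ∀ i : Fin r, ∀ a b : (∀ i : Fin r, Fin (m i)), a i ≠ b i →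
      ∃ t : Fin n, E a t ≠ E b t ∧ ¬ (G i).Adj (E a t) (E b t)

/-- A rate vector `R` of nonnegative reals is feasible if there are positive integers `m n i`
with `(m n 1, …, m n r)` feasible at length `n` for every `n` and `log₂ (m n i) / n → R i`. -/
def FeasibleRate {k r : ℕ} (G : Fin r → SimpleGraph (Fin k)) (R : Fin r → ℝ) : Prop :=
  (∀ i, 0 ≤ R i) ∧
  ∃ m : ℕ → Fin r → ℕ,
    (∀ n i, 0 < m n i) ∧
    (∀ n : ℕ, FeasibleAtLength G (m n) n) ∧
    ∀ i, Filter.Tendsto (fun n : ℕ => Real.logb 2 (m n i) / n) Filter.atTop (nhds (R i))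

/-- A feasible rate vector for two users is optimal if no user can increase his rate while
the other maintains the same rate. -/
def OptimalRate {k : ℕ} (G : Fin 2 → SimpleGraph (Fin k)) (R : Fin 2 → ℝ) : Prop :=
  FeasibleRate G R ∧
  (¬ ∃ R1' : ℝ, R 0 < R1' ∧ FeasibleRate G ![R1', R 1]) ∧
  (¬ ∃ R2' : ℝ, R 1 < R2' ∧ FeasibleRate G ![R 0, R2'])

namespace Prop15
open Finset Filter

def bin : Fin 3 → Fin 2 := fun v => if v = 2 then 1 else 0

def cube {n : ℕ} (x : Fin n → Fin 3) : Finset (Fin n → Fin 2) :=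
  univ.filter fun d => ∀ t, x t ≠ 0 → d t = bin (x t)

lemma mem_cube {n : ℕ} {x : Fin n → Fin 3} {d : Fin n → Fin 2} :
    d ∈ cube x ↔ ∀ t, x t ≠ 0 → d t = bin (x t) := by
  simp [cube]

lemma cube_nonempty {n : ℕ} (x : Fin n → Fin 3) : (cube x).Nonempty :=
  ⟨fun t => bin (x t), mem_cube.2 fun _ _ => rfl⟩

lemma bin_ne {v w : Fin 3} (hv : v ≠ 0) (hw : w ≠ 0) (hvw : v ≠ w) : bin v ≠ bin w := by
  fin_cases v <;> fin_cases w <;> simp_all [bin]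

lemma cube_disjoint {n : ℕ} {x y : Fin n → Fin 3}
    (h : ∃ t, x t ≠ 0 ∧ y t ≠ 0 ∧ x t ≠ y t) : Disjoint (cube x) (cube y) := by
  obtain ⟨t, hx, hy, hxy⟩ := h
  rw [Finset.disjoint_left]
  intro d hdx hdy
  have h1 := mem_cube.1 hdx t hx
  have h2 := mem_cube.1 hdy t hy
  exact bin_ne hx hy hxy (h1 ▸ h2 ▸ rfl)

def slice {n : ℕ} (D : Finset (Fin (n+1) → Fin 2)) (v : Fin 2) : Finset (Fin n → Fin 2) :=
  univ.filter fun d => Fin.cons v d ∈ D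

lemma mem_slice {n : ℕ} {D : Finset (Fin (n+1) → Fin 2)} {v : Fin 2} {d : Fin n → Fin 2} :
    d ∈ slice D v ↔ (Fin.cons v d : Fin (n+1) → Fin 2) ∈ D := by simp [slice]

lemma card_slice {n : ℕ} (D : Finset (Fin (n+1) → Fin 2)) (v : Fin 2) :
    (slice D v).card = (D.filter fun d => d 0 = v).card := by
  apply Finset.card_bij (fun (d : Fin n → Fin 2) _ => (Fin.cons v d : Fin (n+1) → Fin 2))
  · intro d hd
    simp only [Finset.mem_filter]
    exact ⟨mem_slice.1 hd, by simp⟩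
  · intro a ha b hb hab
    have := congrArg Fin.tail hab
    simpa [Fin.tail_cons] using this
  · intro d hd
    simp only [Finset.mem_filter] at hd
    have hcons : (Fin.cons v (Fin.tail d) : Fin (n+1) → Fin 2) = d := by
      rw [← hd.2]; exact Fin.cons_self_tail d
    exact ⟨Fin.tail d, mem_slice.2 (by rw [hcons]; exact hd.1), hcons⟩

lemma card_slice_add {n : ℕ} (D : Finset (Fin (n+1) → Fin 2)) :
    (slice D 0).card + (slice D 1).card = D.card := by
  rw [card_slice, card_slice]
  have : (D.filter fun d => d 0 = 1) = (D.filter fun d => ¬ (d 0 = 0)) := by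
    apply Finset.filter_congr
    intro d _
    constructor
    · intro h; rw [h]; simp
    · intro h
      have h2 : d 0 = 0 ∨ d 0 = 1 := by omega
      tauto
  rw [this]
  rw [Finset.card_filter_add_card_filter_not]


lemma mem_cube_cons {n : ℕ} {v : Fin 3} {x : Fin n → Fin 3} {w : Fin 2} {d : Fin n → Fin 2} :
    (Fin.cons w d : Fin (n+1) → Fin 2) ∈ cube (Fin.cons v x) ↔
      (v ≠ 0 → w = bin v) ∧ d ∈ cube x := by
  rw [mem_cube, mem_cube, Fin.forall_fin_succ]
  simp [Fin.cons_zero, Fin.cons_succ]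

lemma cube_cons_elim {n : ℕ} {v : Fin 3} {x : Fin n → Fin 3} {e : Fin (n+1) → Fin 2}
    (he : e ∈ cube (Fin.cons v x)) : (v ≠ 0 → e 0 = bin v) ∧ Fin.tail e ∈ cube x := by
  have he' : (Fin.cons (e 0) (Fin.tail e) : Fin (n+1) → Fin 2) ∈ cube (Fin.cons v x) := by
    rw [Fin.cons_self_tail]; exact he
  exact mem_cube_cons.1 he'

lemma cube_cons_subset_one {n : ℕ} {x : Fin n → Fin 3} {D : Finset (Fin (n+1) → Fin 2)} :
    cube (Fin.cons 1 x) ⊆ D ↔ cube x ⊆ slice D 0 := by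
  constructor
  · intro h d hd
    rw [mem_slice]
    exact h (mem_cube_cons.2 ⟨fun _ => rfl, hd⟩)
  · intro h e he
    obtain ⟨h0, ht⟩ := cube_cons_elim he
    have h0' : e 0 = 0 := h0 (by decide)
    have : (Fin.cons (0:Fin 2) (Fin.tail e) : Fin (n+1) → Fin 2) ∈ D := mem_slice.1 (h ht)
    rwa [← h0', Fin.cons_self_tail] at this
  
lemma cube_cons_subset_two {n : ℕ} {x : Fin n → Fin 3} {D : Finset (Fin (n+1) → Fin 2)} :
    cube (Fin.cons 2 x) ⊆ D ↔ cube x ⊆ slice D 1 := by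
  constructor
  · intro h d hd
    rw [mem_slice]
    exact h (mem_cube_cons.2 ⟨fun _ => rfl, hd⟩)
  · intro h e he
    obtain ⟨h0, ht⟩ := cube_cons_elim he
    have h0' : e 0 = 1 := h0 (by decide)
    have : (Fin.cons (1:Fin 2) (Fin.tail e) : Fin (n+1) → Fin 2) ∈ D := mem_slice.1 (h ht)
    rwa [← h0', Fin.cons_self_tail] at this

lemma cube_cons_subset_zero {n : ℕ} {x : Fin n → Fin 3} {D : Finset (Fin (n+1) → Fin 2)} :
    cube (Fin.cons 0 x) ⊆ D ↔ cube x ⊆ slice D 0 ∩ slice D 1 := by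
  constructor
  · intro h d hd
    rw [Finset.mem_inter, mem_slice, mem_slice]
    constructor
    · exact h (mem_cube_cons.2 ⟨fun hv => absurd rfl hv, hd⟩)
    · exact h (mem_cube_cons.2 ⟨fun hv => absurd rfl hv, hd⟩)
  · intro h e he
    obtain ⟨-, ht⟩ := cube_cons_elim he
    have hm := h ht
    rw [Finset.mem_inter, mem_slice, mem_slice] at hm
    rcases (by omega : e 0 = 0 ∨ e 0 = 1) with h0 | h0
    · have := hm.1; rwa [← h0, Fin.cons_self_tail] at this
    · have := hm.2; rwa [← h0, Fin.cons_self_tail] at this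

def scount {n : ℕ} (D : Finset (Fin n → Fin 2)) : Finset (Fin n → Fin 3) :=
  univ.filter fun x => cube x ⊆ D

lemma mem_scount {n : ℕ} {D : Finset (Fin n → Fin 2)} {x : Fin n → Fin 3} :
    x ∈ scount D ↔ cube x ⊆ D := by simp [scount]

lemma scount_mono {n : ℕ} {D D' : Finset (Fin n → Fin 2)} (h : D ⊆ D') :
    scount D ⊆ scount D' := fun x hx => mem_scount.2 ((mem_scount.1 hx).trans h)

lemma card_head_fiber {n : ℕ} (S : Finset (Fin (n+1) → Fin 3)) (v : Fin 3)
    (C : Finset (Fin n → Fin 3))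
    (hC : ∀ x : Fin n → Fin 3, ((Fin.cons v x : Fin (n+1) → Fin 3) ∈ S ↔ x ∈ C)) :
    (S.filter fun x => x 0 = v).card = C.card := by
  symm
  apply Finset.card_bij (fun (x : Fin n → Fin 3) _ => (Fin.cons v x : Fin (n+1) → Fin 3))
  · intro x hx
    simp only [Finset.mem_filter]
    exact ⟨(hC x).2 hx, by simp⟩
  · intro a ha b hb hab
    have := congrArg Fin.tail hab
    simpa [Fin.tail_cons] using this
  · intro y hy
    simp only [Finset.mem_filter] at hy
    have hcons : (Fin.cons v (Fin.tail y) : Fin (n+1) → Fin 3) = y := by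
      rw [← hy.2]; exact Fin.cons_self_tail y
    exact ⟨Fin.tail y, (hC _).1 (by rw [hcons]; exact hy.1), hcons⟩

set_option maxHeartbeats 1000000 in
lemma card_head_split {n : ℕ} (S : Finset (Fin (n+1) → Fin 3)) :
    S.card = (S.filter fun x => x 0 = 0).card + (S.filter fun x => x 0 = 1).card
      + (S.filter fun x => x 0 = 2).card := by
  have h := Finset.card_eq_sum_card_fiberwise (s := S) (t := univ) (f := fun x => x 0)
    (fun x _ => Finset.mem_univ _)
  rw [h, Fin.sum_univ_three]

lemma card_scount_succ {n : ℕ} (D : Finset (Fin (n+1) → Fin 2)) :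
    (scount D).card = (scount (slice D 0 ∩ slice D 1)).card
      + (scount (slice D 0)).card + (scount (slice D 1)).card := by
  rw [card_head_split (scount D)]
  rw [card_head_fiber (scount D) 0 (scount (slice D 0 ∩ slice D 1))
      (fun x => by rw [mem_scount, mem_scount, cube_cons_subset_zero]),
    card_head_fiber (scount D) 1 (scount (slice D 0))
      (fun x => by rw [mem_scount, mem_scount, cube_cons_subset_one]),
    card_head_fiber (scount D) 2 (scount (slice D 1))
      (fun x => by rw [mem_scount, mem_scount, cube_cons_subset_two])]


noncomputable def p : ℝ := Real.logb 3 2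

lemma p_pos : 0 < p := Real.logb_pos (by norm_num) (by norm_num)

lemma p_le_one : p ≤ 1 := by
  have := Real.logb_le_logb_of_le (b := 3) (by norm_num) (by norm_num) (by norm_num : (2:ℝ) ≤ 3)
  simpa [p, Real.logb_self_eq_one (by norm_num : (1:ℝ) < 3)] using this

lemma three_rpow_p : (3:ℝ) ^ p = 2 := Real.rpow_logb (by norm_num) (by norm_num) (by norm_num)

lemma key_ineq {u v : ℝ} (hu : 0 ≤ u) (huv : u ≤ v) : (2*u+v) ^ p ≤ u ^ p + v ^ p := by
  rcases eq_or_lt_of_le hu with h | h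
  · rw [← h]
    rw [Real.zero_rpow (ne_of_gt p_pos)]
    norm_num
  · set f : ℝ → ℝ := fun x => u ^ p + x ^ p - (2*u+x) ^ p with hf
    have hderiv : ∀ x ∈ interior (Set.Ici u), HasDerivAt f (p * x ^ (p-1) - p * (2*u+x) ^ (p-1) * 1) x := by
      intro x hx
      rw [interior_Ici] at hx
      have hux : u < x := hx
      have hx0 : x ≠ 0 := ne_of_gt (lt_trans h hux)
      have h2ux : (2*u+x) ≠ 0 := ne_of_gt (by linarith)
      have d1 : HasDerivAt (fun x : ℝ => x ^ p) (p * x ^ (p-1)) x :=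
        Real.hasDerivAt_rpow_const (Or.inl hx0)
      have d2 : HasDerivAt (fun x : ℝ => (2*u+x) ^ p) (p * (2*u+x) ^ (p-1) * 1) x := by
        have dinner : HasDerivAt (fun x : ℝ => 2*u+x) 1 x := (hasDerivAt_id x).const_add (2*u)
        exact (Real.hasDerivAt_rpow_const (Or.inl h2ux)).comp x dinner
      exact ((d1.const_add (u ^ p)).sub d2)
    have hmono : MonotoneOn f (Set.Ici u) := by
      apply monotoneOn_of_deriv_nonneg (convex_Ici u)
      · apply ContinuousOn.sub
        · apply ContinuousOn.add continuousOn_const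
          intro x hx
          have hux : u ≤ x := hx
          exact (Real.continuousAt_rpow_const x p
            (Or.inl (ne_of_gt (lt_of_lt_of_le h hux)))).continuousWithinAt
        · apply ContinuousOn.rpow_const
          · fun_prop
          · intro x hx
            have hux : u ≤ x := hx
            exact Or.inl (ne_of_gt (by linarith))
      · intro x hx
        exact (hderiv x hx).differentiableAt.differentiableWithinAt
      · intro x hx
        rw [(hderiv x hx).deriv]
        rw [interior_Ici] at hx
        have hxpos : 0 < x := lt_of_le_of_lt hu hx
        have hle : (2*u+x) ^ (p-1) ≤ x ^ (p-1) :=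
          Real.rpow_le_rpow_of_nonpos hxpos (by linarith) (by linarith [p_le_one])
        nlinarith [p_pos]
    have hfu : f u = 0 := by
      have h3 : (2*u+u) = 3*u := by ring
      simp only [hf, h3]
      rw [Real.mul_rpow (by norm_num) hu, three_rpow_p]
      ring
    have := hmono (Set.self_mem_Ici) (Set.mem_Ici.2 huv) huv
    rw [hfu] at this
    simp only [hf] at this
    linarith

lemma step_ineq {a s1 s2 A B : ℝ} (ha : 0 ≤ a) (hs1 : 0 ≤ s1) (hs2 : 0 ≤ s2)
    (h1 : a ≤ s1) (h2 : a ≤ s2) (hA : s1 ^ p ≤ A) (hB : s2 ^ p ≤ B) :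
    (a + s1 + s2) ^ p ≤ A + B := by
  rcases le_total s1 s2 with h | h
  · calc (a + s1 + s2) ^ p ≤ (2*s1 + s2) ^ p :=
          Real.rpow_le_rpow (by linarith) (by linarith) (le_of_lt p_pos)
      _ ≤ s1 ^ p + s2 ^ p := key_ineq hs1 h
      _ ≤ A + B := add_le_add hA hB
  · calc (a + s1 + s2) ^ p ≤ (2*s2 + s1) ^ p :=
          Real.rpow_le_rpow (by linarith) (by linarith) (le_of_lt p_pos)
      _ ≤ s2 ^ p + s1 ^ p := key_ineq hs2 h
      _ ≤ A + B := by linarith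

lemma scount_rpow_le : ∀ (n : ℕ) (D : Finset (Fin n → Fin 2)),
    ((scount D).card : ℝ) ^ p ≤ (D.card : ℝ) := by
  intro n
  induction n with
  | zero =>
    intro D
    rcases (scount D).eq_empty_or_nonempty with h | ⟨x, hx⟩
    · rw [h]
      simp [Real.zero_rpow (ne_of_gt p_pos)]
    · have hD : 1 ≤ D.card :=
        Finset.card_pos.2 ((cube_nonempty x).mono (mem_scount.1 hx))
      have hs : (scount D).card ≤ 1 := by
        have := Finset.card_le_univ (scount D)
        have h1 : Fintype.card (Fin 0 → Fin 3) = 1 := by simp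
        omega
      calc ((scount D).card : ℝ) ^ p ≤ 1 ^ p := by
            apply Real.rpow_le_rpow (by positivity) _ (le_of_lt p_pos)
            exact_mod_cast hs
        _ = 1 := Real.one_rpow p
        _ ≤ (D.card : ℝ) := by exact_mod_cast hD
  | succ n ih =>
    intro D
    rw [card_scount_succ D, ← card_slice_add D]
    push_cast
    apply step_ineq (by positivity) (by positivity) (by positivity)
    · exact_mod_cast Finset.card_le_card (scount_mono Finset.inter_subset_left)
    · exact_mod_cast Finset.card_le_card (scount_mono Finset.inter_subset_right)
    · exact ih _
    · exact ih _

section Q2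
variable (G2 : SimpleGraph (Fin 3))

/-- pairwise distinguishable family for user 2 -/
def PD {n : ℕ} (T : Finset (Fin n → Fin 3)) : Prop :=
  ∀ x ∈ T, ∀ y ∈ T, x ≠ y → ∃ t, x t ≠ y t ∧ ¬ G2.Adj (x t) (y t)

def tails {n : ℕ} (T : Finset (Fin (n+1) → Fin 3)) (v : Fin 3) : Finset (Fin n → Fin 3) :=
  (T.filter fun x => x 0 = v).image Fin.tail

lemma mem_tails {n : ℕ} {T : Finset (Fin (n+1) → Fin 3)} {v : Fin 3} {x' : Fin n → Fin 3} :
    x' ∈ tails T v ↔ (Fin.cons v x' : Fin (n+1) → Fin 3) ∈ T := by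
  constructor
  · intro h
    obtain ⟨x, hx, rfl⟩ := Finset.mem_image.1 h
    rw [Finset.mem_filter] at hx
    rw [← hx.2, Fin.cons_self_tail]
    exact hx.1
  · intro h
    apply Finset.mem_image.2
    exact ⟨Fin.cons v x', Finset.mem_filter.2 ⟨h, by simp⟩, by simp [Fin.tail_cons]⟩

lemma card_tails {n : ℕ} (T : Finset (Fin (n+1) → Fin 3)) (v : Fin 3) :
    (tails T v).card = (T.filter fun x => x 0 = v).card := by
  apply Finset.card_image_of_injOn
  intro x hx y hy hxy
  rw [Finset.mem_coe, Finset.mem_filter] at hx hy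
  rw [← Fin.cons_self_tail x, ← Fin.cons_self_tail y, hx.2, hy.2, hxy]

/-- cross-distinguishability descends to tails for conflicting heads -/
lemma tails_dist {n : ℕ} {T : Finset (Fin (n+1) → Fin 3)} (hT : PD G2 T)
    {v w : Fin 3} (hc : v = w ∨ G2.Adj v w) {x' y' : Fin n → Fin 3}
    (hx : x' ∈ tails T v) (hy : y' ∈ tails T w) (hne : v ≠ w ∨ x' ≠ y') :
    ∃ t, x' t ≠ y' t ∧ ¬ G2.Adj (x' t) (y' t) := by
  rw [mem_tails] at hx hy
  have hxyne : (Fin.cons v x' : Fin (n+1) → Fin 3) ≠ Fin.cons w y' := by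
    intro h
    have hv : v = w := by
      have := congrFun h 0
      simpa using this
    have hx' : x' = y' := by
      funext s
      have := congrFun h s.succ
      simpa using this
    rcases hne with h' | h' <;> exact h' (by assumption)
  obtain ⟨t, h1, h2⟩ := hT _ hx _ hy hxyne
  rcases Fin.eq_zero_or_eq_succ t with rfl | ⟨s, rfl⟩
  · simp only [Fin.cons_zero] at h1 h2
    rcases hc with rfl | hadj
    · exact absurd rfl h1
    · exact absurd hadj h2
  · simp only [Fin.cons_succ] at h1 h2
    exact ⟨s, h1, h2⟩

lemma tails_disjoint {n : ℕ} {T : Finset (Fin (n+1) → Fin 3)} (hT : PD G2 T)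
    {v w : Fin 3} (hc : v = w ∨ G2.Adj v w) (hvw : v ≠ w) :
    Disjoint (tails T v) (tails T w) := by
  rw [Finset.disjoint_left]
  intro x' hx hy
  obtain ⟨t, h1, -⟩ := tails_dist G2 hT hc hx hy (Or.inl hvw)
  exact h1 rfl

lemma tails_cube_subset {n : ℕ} {T : Finset (Fin (n+1) → Fin 3)}
    {D : Finset (Fin (n+1) → Fin 2)} (hcube : ∀ x ∈ T, cube x ⊆ D)
    {v : Fin 3} {x' : Fin n → Fin 3} (hx : x' ∈ tails T v) :
    cube x' ⊆ (if v = 0 then slice D 0 ∩ slice D 1 else if v = 1 then slice D 0 else slice D 1) := by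
  rw [mem_tails] at hx
  have h := hcube _ hx
  fin_cases v
  · simpa using cube_cons_subset_zero.1 h
  · simpa using cube_cons_subset_one.1 h
  · simpa using cube_cons_subset_two.1 h

lemma q2_bound (hedge : ∃ a b, G2.Adj a b) :
    ∀ (n : ℕ) (D : Finset (Fin n → Fin 2)) (T : Finset (Fin n → Fin 3)),
      PD G2 T → (∀ x ∈ T, cube x ⊆ D) → T.card ≤ D.card := by
  intro n
  induction n with
  | zero =>
    intro D T _ hcube
    rcases T.eq_empty_or_nonempty with rfl | ⟨x, hx⟩
    · simp
    · have hD : 1 ≤ D.card :=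
        Finset.card_pos.2 ((cube_nonempty x).mono (hcube x hx))
      have hT : T.card ≤ 1 := by
        have := Finset.card_le_univ T
        have h1 : Fintype.card (Fin 0 → Fin 3) = 1 := by simp
        omega
      omega
  | succ n ih =>
    intro D T hT hcube
    -- the three tail families
    have hcube0 : ∀ x' ∈ tails T 0, cube x' ⊆ slice D 0 ∩ slice D 1 := by
      intro x' hx'; simpa using tails_cube_subset hcube hx'
    have hcube1 : ∀ x' ∈ tails T 1, cube x' ⊆ slice D 0 := by
      intro x' hx'; simpa using tails_cube_subset hcube hx'
    have hcube2 : ∀ x' ∈ tails T 2, cube x' ⊆ slice D 1 := by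
      intro x' hx'; simpa using tails_cube_subset hcube hx'
    have hsplit : T.card = (tails T 0).card + (tails T 1).card + (tails T 2).card := by
      rw [card_head_split T, card_tails, card_tails, card_tails]
    have hPDsame : ∀ v : Fin 3, PD G2 (tails T v) := by
      intro v x' hx y' hy hne
      exact tails_dist G2 hT (Or.inl rfl) hx hy (Or.inr hne)
    by_cases h12 : G2.Adj 1 2
    · -- group {1,2} and {0}
      have hdisj := tails_disjoint G2 hT (Or.inr h12) (by decide)
      have hu : PD G2 (tails T 1 ∪ tails T 2) := by
        intro x' hx y' hy hne
        rw [Finset.mem_union] at hx hy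
        rcases hx with hx | hx <;> rcases hy with hy | hy
        · exact tails_dist G2 hT (Or.inl rfl) hx hy (Or.inr hne)
        · exact tails_dist G2 hT (Or.inr h12) hx hy (Or.inr hne)
        · exact tails_dist G2 hT (Or.inr (G2.adj_symm h12)) hx hy (Or.inr hne)
        · exact tails_dist G2 hT (Or.inl rfl) hx hy (Or.inr hne)
      have hucube : ∀ x' ∈ tails T 1 ∪ tails T 2, cube x' ⊆ slice D 0 ∪ slice D 1 := by
        intro x' hx
        rw [Finset.mem_union] at hx
        rcases hx with hx | hx
        · exact (hcube1 _ hx).trans Finset.subset_union_left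
        · exact (hcube2 _ hx).trans Finset.subset_union_right
      have b1 : (tails T 1).card + (tails T 2).card ≤ (slice D 0 ∪ slice D 1).card := by
        rw [← Finset.card_union_of_disjoint hdisj]
        exact ih _ _ hu hucube
      have b0 : (tails T 0).card ≤ (slice D 0 ∩ slice D 1).card :=
        ih _ _ (hPDsame 0) hcube0
      have hDcard := card_slice_add D
      have := Finset.card_inter_add_card_union (slice D 0) (slice D 1)
      omega
    · by_cases h01 : G2.Adj 0 1
      · have hdisj := tails_disjoint G2 hT (Or.inr h01) (by decide)
        have hu : PD G2 (tails T 0 ∪ tails T 1) := by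
          intro x' hx y' hy hne
          rw [Finset.mem_union] at hx hy
          rcases hx with hx | hx <;> rcases hy with hy | hy
          · exact tails_dist G2 hT (Or.inl rfl) hx hy (Or.inr hne)
          · exact tails_dist G2 hT (Or.inr h01) hx hy (Or.inr hne)
          · exact tails_dist G2 hT (Or.inr (G2.adj_symm h01)) hx hy (Or.inr hne)
          · exact tails_dist G2 hT (Or.inl rfl) hx hy (Or.inr hne)
        have hucube : ∀ x' ∈ tails T 0 ∪ tails T 1, cube x' ⊆ slice D 0 := by
          intro x' hx
          rw [Finset.mem_union] at hx
          rcases hx with hx | hx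
          · exact (hcube0 _ hx).trans Finset.inter_subset_left
          · exact hcube1 _ hx
        have b1 : (tails T 0).card + (tails T 1).card ≤ (slice D 0).card := by
          rw [← Finset.card_union_of_disjoint hdisj]
          exact ih _ _ hu hucube
        have b2 : (tails T 2).card ≤ (slice D 1).card := ih _ _ (hPDsame 2) hcube2
        have hDcard := card_slice_add D
        omega
      · have h02 : G2.Adj 0 2 := by
          by_contra h02
          obtain ⟨a, b, hab⟩ := hedge
          revert hab
          fin_cases a <;> fin_cases b <;> intro hab <;>
            first
              | exact G2.irrefl hab
              | exact h12 hab
              | exact h01 hab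
              | exact h02 hab
              | exact h12 (G2.adj_symm hab)
              | exact h01 (G2.adj_symm hab)
              | exact h02 (G2.adj_symm hab)
        have hdisj := tails_disjoint G2 hT (Or.inr h02) (by decide)
        have hu : PD G2 (tails T 0 ∪ tails T 2) := by
          intro x' hx y' hy hne
          rw [Finset.mem_union] at hx hy
          rcases hx with hx | hx <;> rcases hy with hy | hy
          · exact tails_dist G2 hT (Or.inl rfl) hx hy (Or.inr hne)
          · exact tails_dist G2 hT (Or.inr h02) hx hy (Or.inr hne)
          · exact tails_dist G2 hT (Or.inr (G2.adj_symm h02)) hx hy (Or.inr hne)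
          · exact tails_dist G2 hT (Or.inl rfl) hx hy (Or.inr hne)
        have hucube : ∀ x' ∈ tails T 0 ∪ tails T 2, cube x' ⊆ slice D 1 := by
          intro x' hx
          rw [Finset.mem_union] at hx
          rcases hx with hx | hx
          · exact (hcube0 _ hx).trans Finset.inter_subset_right
          · exact hcube2 _ hx
        have b1 : (tails T 0).card + (tails T 2).card ≤ (slice D 1).card := by
          rw [← Finset.card_union_of_disjoint hdisj]
          exact ih _ _ hu hucube
        have b2 : (tails T 1).card ≤ (slice D 0).card := ih _ _ (hPDsame 1) hcube1
        have hDcard := card_slice_add D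
        omega

end Q2
section Converse
variable (G : Fin 2 → SimpleGraph (Fin 3))
  (hG1 : ∀ a b : Fin 3, (G 0).Adj a b ↔ (a = 0 ∧ b ≠ 0) ∨ (a ≠ 0 ∧ b = 0))
  {m : Fin 2 → ℕ} {n : ℕ}

/-- the message tuple with components `a` and `b` -/
def pair (m : Fin 2 → ℕ) (a : Fin (m 0)) (b : Fin (m 1)) : ∀ i : Fin 2, Fin (m i) :=
  Fin.cons a (Fin.cons b (fun i => i.elim0))

lemma pair_zero (m : Fin 2 → ℕ) (a : Fin (m 0)) (b : Fin (m 1)) : pair m a b 0 = a := rfl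
lemma pair_one (m : Fin 2 → ℕ) (a : Fin (m 0)) (b : Fin (m 1)) : pair m a b 1 = b := rfl

section WithE
variable {E : (∀ i : Fin 2, Fin (m i)) → (Fin n → Fin 3)}
  (hE : ∀ i : Fin 2, ∀ a b : (∀ i : Fin 2, Fin (m i)), a i ≠ b i →
      ∃ t : Fin n, E a t ≠ E b t ∧ ¬ (G i).Adj (E a t) (E b t))

include hG1 hE in
lemma user1_sep {a a' : Fin (m 0)} {b b' : Fin (m 1)} (hne : a ≠ a') :
    ∃ t, E (pair m a b) t ≠ 0 ∧ E (pair m a' b') t ≠ 0 ∧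
      E (pair m a b) t ≠ E (pair m a' b') t := by
  obtain ⟨t, h1, h2⟩ := hE 0 (pair m a b) (pair m a' b') (by rw [pair_zero, pair_zero]; exact hne)
  refine ⟨t, ?_, ?_, h1⟩
  · intro hx
    have hy : E (pair m a' b') t ≠ 0 := fun hy => h1 (hx.trans hy.symm)
    exact h2 ((hG1 _ _).2 (Or.inl ⟨hx, hy⟩))
  · intro hy
    have hx : E (pair m a b) t ≠ 0 := fun hx => h1 (hx.trans hy.symm)
    exact h2 ((hG1 _ _).2 (Or.inr ⟨hx, hy⟩))

include hE in
lemma user2_sep {a a' : Fin (m 0)} {b b' : Fin (m 1)} (hne : b ≠ b') :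
    ∃ t, E (pair m a b) t ≠ E (pair m a' b') t ∧
      ¬ (G 1).Adj (E (pair m a b) t) (E (pair m a' b') t) :=
  hE 1 (pair m a b) (pair m a' b') (by rw [pair_one, pair_one]; exact hne)

/-- the union of the cubes of the codewords carrying first message `a` -/
def Dset (E : (∀ i : Fin 2, Fin (m i)) → (Fin n → Fin 3)) (a : Fin (m 0)) :
    Finset (Fin n → Fin 2) :=
  univ.biUnion (fun b : Fin (m 1) => cube (E (pair m a b)))

include hG1 hE in
lemma Dset_disjoint {a a' : Fin (m 0)} (hne : a ≠ a') : Disjoint (Dset E a) (Dset E a') := by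
  rw [Finset.disjoint_left]
  intro d hd hd'
  rw [Dset, Finset.mem_biUnion] at hd hd'
  obtain ⟨b, -, hb⟩ := hd
  obtain ⟨b', -, hb'⟩ := hd'
  have := cube_disjoint (user1_sep G hG1 hE hne (b := b) (b' := b'))
  rw [Finset.disjoint_left] at this
  exact this hb hb'

include hG1 hE in
lemma Dset_sum_le : ∑ a : Fin (m 0), (Dset E a).card ≤ 2 ^ n := by
  classical
  rw [← Finset.card_biUnion (fun a _ a' _ hne => Dset_disjoint G hG1 hE hne)]
  calc (univ.biUnion fun a : Fin (m 0) => Dset E a).card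
      ≤ Fintype.card (Fin n → Fin 2) := Finset.card_le_univ _
    _ = 2 ^ n := by simp

include hE in
lemma m1_le_q2 (hedge : ∃ a b, (G 1).Adj a b) (a : Fin (m 0)) : m 1 ≤ (Dset E a).card := by
  have hinj : Function.Injective (fun b : Fin (m 1) => E (pair m a b)) := by
    intro b b' h
    by_contra hne
    obtain ⟨t, h1, -⟩ := user2_sep G hE (a := a) (a' := a) hne
    exact h1 (congrFun h t)
  have hcard : (univ.image (fun b : Fin (m 1) => E (pair m a b))).card = m 1 := by
    rw [Finset.card_image_of_injective _ hinj, Finset.card_univ, Fintype.card_fin]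
  rw [← hcard]
  apply q2_bound (G 1) hedge n (Dset E a)
  · intro x hx y hy hxy
    obtain ⟨b, -, rfl⟩ := Finset.mem_image.1 hx
    obtain ⟨b', -, rfl⟩ := Finset.mem_image.1 hy
    have hbb : b ≠ b' := fun h => hxy (by rw [h])
    exact user2_sep G hE hbb
  · intro x hx
    obtain ⟨b, -, rfl⟩ := Finset.mem_image.1 hx
    exact Finset.subset_biUnion_of_mem
      (fun b : Fin (m 1) => cube (E (pair m a b))) (Finset.mem_univ b)

include hE in
lemma m1_le_q3 (a : Fin (m 0)) : m 1 ≤ (scount (Dset E a)).card := by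
  have hm : m 1 = (univ : Finset (Fin (m 1))).card := by simp
  rw [hm]
  apply Finset.card_le_card_of_injOn (fun b : Fin (m 1) => E (pair m a b))
  · intro b _
    exact mem_scount.2 (Finset.subset_biUnion_of_mem
      (fun b : Fin (m 1) => cube (E (pair m a b))) (Finset.mem_univ b))
  · intro b _ b' _ h
    by_contra hne
    obtain ⟨t, h1, -⟩ := user2_sep G hE (a := a) (a' := a) hne
    exact h1 (congrFun h t)

end WithE

include hG1 in
lemma converse_q2 (hedge : ∃ a b, (G 1).Adj a b) (hfeas : FeasibleAtLength G m n) :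
    m 0 * m 1 ≤ 2 ^ n := by
  obtain ⟨E, hE⟩ := hfeas
  calc m 0 * m 1 = ∑ _a : Fin (m 0), m 1 := by
        rw [Finset.sum_const, Finset.card_univ, Fintype.card_fin, smul_eq_mul]
    _ ≤ ∑ a : Fin (m 0), (Dset E a).card :=
        Finset.sum_le_sum (fun a _ => m1_le_q2 G hE hedge a)
    _ ≤ 2 ^ n := Dset_sum_le G hG1 hE

include hG1 in
lemma converse_q3 (hfeas : FeasibleAtLength G m n) :
    (m 0 : ℝ) * (m 1 : ℝ) ^ p ≤ 2 ^ n := by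
  obtain ⟨E, hE⟩ := hfeas
  have key : ∀ a : Fin (m 0), ((m 1 : ℝ)) ^ p ≤ ((Dset E a).card : ℝ) := by
    intro a
    calc ((m 1 : ℝ)) ^ p ≤ (((scount (Dset E a)).card : ℝ)) ^ p := by
          apply Real.rpow_le_rpow (by positivity) _ (le_of_lt p_pos)
          exact_mod_cast m1_le_q3 G hE a
      _ ≤ ((Dset E a).card : ℝ) := scount_rpow_le n _
  calc (m 0 : ℝ) * (m 1 : ℝ) ^ p = ∑ _a : Fin (m 0), (m 1 : ℝ) ^ p := by
        rw [Finset.sum_const, Finset.card_univ, Fintype.card_fin, nsmul_eq_mul]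
    _ ≤ ∑ a : Fin (m 0), ((Dset E a).card : ℝ) := Finset.sum_le_sum (fun a _ => key a)
    _ ≤ 2 ^ n := by
        push_cast [← Nat.cast_sum]
        exact_mod_cast Dset_sum_le G hG1 hE

end Converse

lemma alphaN_le {G : SimpleGraph (Fin 3)} {q : ℕ} (κ : Fin 3 → Fin q)
    (hκ : ∀ a b : Fin 3, a ≠ b → ¬G.Adj a b → κ a ≠ κ b) (n : ℕ) :
    alphaN G n ≤ q ^ n := by
  unfold alphaN
  refine csSup_le ⟨0, (∅ : Finset (Fin n → Fin 3)), by simp, by simp⟩ ?_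
  rintro N ⟨S, rfl, hS⟩
  calc S.card ≤ (univ : Finset (Fin n → Fin q)).card := by
        apply Finset.card_le_card_of_injOn (fun x => κ ∘ x) (fun x _ => Finset.mem_univ _)
        intro x hx y hy hxy
        by_contra hne
        obtain ⟨t, h1, h2⟩ := hS x hx y hy hne
        exact hκ _ _ h1 h2 (congrFun hxy t)
    _ = q ^ n := by simp

lemma alphaN_ge {G : SimpleGraph (Fin 3)} {q : ℕ} (ι : Fin q → Fin 3)
    (hι : ∀ a b : Fin q, a ≠ b → ι a ≠ ι b ∧ ¬G.Adj (ι a) (ι b)) (n : ℕ) :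
    q ^ n ≤ alphaN G n := by
  apply le_csSup
  · refine ⟨3 ^ n, ?_⟩
    rintro N ⟨S, rfl, -⟩
    calc S.card ≤ (univ : Finset (Fin n → Fin 3)).card := Finset.card_le_univ S
      _ = 3 ^ n := by simp
  · refine ⟨(univ : Finset (Fin n → Fin q)).image (fun f => ι ∘ f), ?_, ?_⟩
    · have hιinj : Function.Injective ι := by
        intro a b hab
        by_contra hne
        exact (hι a b hne).1 hab
      have hinj2 : Function.Injective (fun f : Fin n → Fin q => ι ∘ f) :=
        fun f g h => funext fun s => hιinj (congrFun h s)
      rw [Finset.card_image_of_injective _ hinj2, Finset.card_univ]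
      simp
    · intro x hx y hy hxy
      obtain ⟨f, -, rfl⟩ := Finset.mem_image.1 hx
      obtain ⟨g, -, rfl⟩ := Finset.mem_image.1 hy
      have : f ≠ g := fun h => hxy (by rw [h])
      obtain ⟨t, ht⟩ := Function.ne_iff.1 this
      exact ⟨t, (hι _ _ ht).1, (hι _ _ ht).2⟩

lemma alphaN_eq {G : SimpleGraph (Fin 3)} {q : ℕ} (κ : Fin 3 → Fin q) (ι : Fin q → Fin 3)
    (hκ : ∀ a b : Fin 3, a ≠ b → ¬G.Adj a b → κ a ≠ κ b)
    (hι : ∀ a b : Fin q, a ≠ b → ι a ≠ ι b ∧ ¬G.Adj (ι a) (ι b)) (n : ℕ) :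
    alphaN G n = q ^ n :=
  le_antisymm (alphaN_le κ hκ n) (alphaN_ge ι hι n)

lemma shannonCapacity_eq {G : SimpleGraph (Fin 3)} {q : ℕ} (hq : 1 ≤ q)
    (h : ∀ n, alphaN G n = q ^ n) : shannonCapacity G = q := by
  have key : ∀ n : ℕ, (alphaN G (n + 1) : ℝ) ^ (((n : ℝ) + 1))⁻¹ = q := by
    intro n
    rw [h (n + 1)]
    push_cast
    rw [← Real.rpow_natCast (q : ℝ) (n + 1), ← Real.rpow_mul (by positivity)]
    push_cast
    rw [mul_inv_cancel₀ (by positivity), Real.rpow_one]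
  rw [shannonCapacity]
  simp_rw [key]
  exact ciSup_const


lemma ceil_div_tendsto {α : ℝ} (h0 : 0 ≤ α) :
    Tendsto (fun n : ℕ => (⌈α * n⌉₊ : ℝ) / n) atTop (nhds α) := by
  refine tendsto_of_tendsto_of_tendsto_of_le_of_le' (g := fun _ : ℕ => α)
    (h := fun n : ℕ => α + 1 / n) tendsto_const_nhds ?_ ?_ ?_
  · have : Tendsto (fun n : ℕ => 1 / (n:ℝ)) atTop (nhds 0) := tendsto_one_div_atTop_nhds_zero_nat
    simpa using tendsto_const_nhds.add this
  · filter_upwards [eventually_ge_atTop 1] with n hn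
    have hnpos : (0:ℝ) < n := by exact_mod_cast hn
    rw [le_div_iff₀ hnpos]
    calc α * n ≤ ⌈α * n⌉₊ := Nat.le_ceil _
      _ = (⌈α * n⌉₊ : ℝ) * 1 := by ring
      _ ≤ _ := by rw [mul_one]
  · filter_upwards [eventually_ge_atTop 1] with n hn
    have hnpos : (0:ℝ) < n := by exact_mod_cast hn
    rw [div_le_iff₀ hnpos]
    have h1 : (⌈α * n⌉₊ : ℝ) < α * n + 1 := Nat.ceil_lt_add_one (by positivity)
    calc (⌈α * n⌉₊ : ℝ) ≤ α * n + 1 := le_of_lt h1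
      _ ≤ (α + 1/n) * n := by field_simp; rfl

section Feas
variable (G : Fin 2 → SimpleGraph (Fin 3))
  (hG1 : ∀ a b : Fin 3, (G 0).Adj a b ↔ (a = 0 ∧ b ≠ 0) ∨ (a ≠ 0 ∧ b = 0))

def iota1 : Fin 2 → Fin 3 := ![1, 2]

lemma iota1_prop : ∀ u v : Fin 2, u ≠ v → iota1 u ≠ iota1 v ∧ iota1 u ≠ 0 ∧ iota1 v ≠ 0 := by
  decide

include hG1 in
lemma feasAt (q : ℕ) (ι : Fin q → Fin 3)
    (hι : ∀ a b : Fin q, a ≠ b → ι a ≠ ι b ∧ ¬(G 1).Adj (ι a) (ι b))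
    (n n1 : ℕ) (hn1 : n1 ≤ n) :
    FeasibleAtLength G ![2 ^ n1, q ^ (n - n1)] n := by
  set M : Fin 2 → ℕ := ![2 ^ n1, q ^ (n - n1)] with hM
  have hm0 : M 0 = 2 ^ n1 := rfl
  have hm1 : M 1 = q ^ (n - n1) := rfl
  refine ⟨fun msg t => if h : (t : ℕ) < n1
    then iota1 (finFunctionFinEquiv.symm (Fin.cast hm0 (msg 0)) ⟨t, h⟩)
    else ι (finFunctionFinEquiv.symm (Fin.cast hm1 (msg 1)) ⟨(t : ℕ) - n1, by
      have := t.2; omega⟩), ?_⟩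
  intro i
  fin_cases i
  · intro a b hab
    have hne : finFunctionFinEquiv.symm (Fin.cast hm0 (a 0)) ≠
        finFunctionFinEquiv.symm (Fin.cast hm0 (b 0)) := by
      intro h
      exact hab (Fin.cast_injective _ (finFunctionFinEquiv.symm.injective h))
    obtain ⟨s, hs⟩ := Function.ne_iff.1 hne
    refine ⟨⟨s, lt_of_lt_of_le s.2 hn1⟩, ?_⟩
    have hlt : ((⟨s, lt_of_lt_of_le s.2 hn1⟩ : Fin n) : ℕ) < n1 := s.2
    simp only [dif_pos hlt]
    have hidx : (⟨((⟨s, lt_of_lt_of_le s.2 hn1⟩ : Fin n) : ℕ), hlt⟩ : Fin n1) = s := by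
      apply Fin.ext; rfl
    simp only [hidx]
    obtain ⟨hd, h0a, h0b⟩ := iota1_prop _ _ hs
    refine ⟨hd, ?_⟩
    intro hadj
    rcases (hG1 _ _).1 hadj with ⟨h, -⟩ | ⟨-, h⟩
    · exact h0a h
    · exact h0b h
  · intro a b hab
    have hne : finFunctionFinEquiv.symm (Fin.cast hm1 (a 1)) ≠
        finFunctionFinEquiv.symm (Fin.cast hm1 (b 1)) := by
      intro h
      exact hab (Fin.cast_injective _ (finFunctionFinEquiv.symm.injective h))
    obtain ⟨s, hs⟩ := Function.ne_iff.1 hne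
    have hst : n1 + (s : ℕ) < n := by have := s.2; omega
    refine ⟨⟨n1 + s, hst⟩, ?_⟩
    have hlt : ¬ ((⟨n1 + s, hst⟩ : Fin n) : ℕ) < n1 := by simp
    simp only [dif_neg hlt]
    have hidx : (⟨((⟨n1 + s, hst⟩ : Fin n) : ℕ) - n1, by have := s.2; omega⟩ : Fin (n - n1)) = s := by
      apply Fin.ext
      simp
    simp only [hidx]
    obtain ⟨hd, hnadj⟩ := hι _ _ hs
    exact ⟨hd, hnadj⟩

include hG1 in
lemma feas_rate (q : ℕ) (ι : Fin q → Fin 3)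
    (hι : ∀ a b : Fin q, a ≠ b → ι a ≠ ι b ∧ ¬(G 1).Adj (ι a) (ι b))
    (hq : 1 ≤ q) (α : ℝ) (hα : α ∈ Set.Icc (0:ℝ) 1) :
    FeasibleRate G ![α, (1 - α) * Real.logb 2 q] := by
  obtain ⟨h0, h1⟩ := hα
  have hLnn : 0 ≤ Real.logb 2 (q:ℝ) := Real.logb_nonneg (by norm_num) (by exact_mod_cast hq)
  constructor
  · rw [Fin.forall_fin_two]
    constructor
    · simpa using h0
    · simp only [Matrix.cons_val_one, Matrix.head_cons]
      exact mul_nonneg (by linarith) hLnn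
  · refine ⟨fun n => ![2 ^ ⌈α * n⌉₊, q ^ (n - ⌈α * n⌉₊)], ?_, ?_, ?_⟩
    · intro n
      rw [Fin.forall_fin_two]
      constructor
      · simp only [Matrix.cons_val_zero]
        exact pow_pos (by norm_num) _
      · simp only [Matrix.cons_val_one, Matrix.head_cons]
        exact pow_pos hq _
    · intro n
      apply feasAt G hG1 q ι hι n _ ?_
      rw [Nat.ceil_le]
      calc α * n ≤ 1 * n := by
            apply mul_le_mul_of_nonneg_right h1 (by positivity)
        _ = (n:ℝ) := by ring
    · have hceil : ∀ n : ℕ, ⌈α * n⌉₊ ≤ n := by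
        intro n
        rw [Nat.ceil_le]
        calc α * n ≤ 1 * n := by
              apply mul_le_mul_of_nonneg_right h1 (by positivity)
          _ = (n:ℝ) := by ring
      have hmain := ceil_div_tendsto h0
      rw [Fin.forall_fin_two]
      constructor
      · simp only [Matrix.cons_val_zero]
        apply hmain.congr'
        filter_upwards [eventually_ge_atTop 1] with n hn
        have hlogb : Real.logb 2 ((2:ℝ) ^ ⌈α * (n:ℝ)⌉₊) = (⌈α * (n:ℝ)⌉₊ : ℝ) := by
          rw [Real.logb_pow, Real.logb_self_eq_one (by norm_num : (1:ℝ) < 2), mul_one]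
        push_cast
        rw [hlogb]
      · simp only [Matrix.cons_val_one, Matrix.head_cons]
        have htarget : Tendsto (fun n : ℕ => (1 - (⌈α * n⌉₊ : ℝ)/n) * Real.logb 2 q)
            atTop (nhds ((1 - α) * Real.logb 2 q)) :=
          (tendsto_const_nhds.sub hmain).mul tendsto_const_nhds
        apply htarget.congr'
        filter_upwards [eventually_ge_atTop 1] with n hn
        have hnpos : (0:ℝ) < n := by exact_mod_cast hn
        have hlogb : Real.logb 2 ((q:ℝ) ^ (n - ⌈α * n⌉₊)) =
            ((n - ⌈α * n⌉₊ : ℕ) : ℝ) * Real.logb 2 q := by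
          rw [Real.logb_pow]
        push_cast
        rw [hlogb]
        push_cast [Nat.cast_sub (hceil n)]
        field_simp
end Feas
lemma rate_le_one {G : Fin 2 → SimpleGraph (Fin 3)} {R : Fin 2 → ℝ} {K : ℝ}
    (hbound : ∀ n : ℕ, ∀ m : Fin 2 → ℕ, (∀ i, 0 < m i) → FeasibleAtLength G m n →
      Real.logb 2 (m 0) + K * Real.logb 2 (m 1) ≤ n)
    (hfeas : FeasibleRate G R) : R 0 + K * R 1 ≤ 1 := by
  obtain ⟨hnn, m, hpos, hf, hlim⟩ := hfeas
  have hT : Tendsto (fun n : ℕ => Real.logb 2 (m n 0) / n + K * (Real.logb 2 (m n 1) / n))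
      atTop (nhds (R 0 + K * R 1)) := (hlim 0).add ((hlim 1).const_mul K)
  apply le_of_tendsto hT
  filter_upwards [eventually_ge_atTop 1] with n hn
  have hnpos : (0:ℝ) < n := by exact_mod_cast hn
  have hb := hbound n (m n) (hpos n) (hf n)
  have heq : Real.logb 2 (m n 0) / n + K * (Real.logb 2 (m n 1) / n)
      = (Real.logb 2 (m n 0) + K * Real.logb 2 (m n 1)) / n := by
    field_simp
  rw [heq, div_le_one hnpos]
  exact hb

lemma logb_two_pow (n : ℕ) : Real.logb 2 ((2:ℝ) ^ n) = n := by
  rw [Real.logb_pow, Real.logb_self_eq_one (by norm_num : (1:ℝ) < 2), mul_one]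

lemma bound_of_mul_le {m : Fin 2 → ℕ} {n : ℕ} (hpos : ∀ i, 0 < m i)
    (h : (m 0 : ℝ) * (m 1 : ℝ) ≤ 2 ^ n) :
    Real.logb 2 (m 0) + 1 * Real.logb 2 (m 1) ≤ n := by
  have h0 : (0:ℝ) < m 0 := by exact_mod_cast hpos 0
  have h1 : (0:ℝ) < m 1 := by exact_mod_cast hpos 1
  have hle := Real.logb_le_logb_of_le (b := 2) (by norm_num) (by positivity) h
  rw [Real.logb_mul (ne_of_gt h0) (ne_of_gt h1), logb_two_pow] at hle
  linarith

lemma bound_of_rpow_le {m : Fin 2 → ℕ} {n : ℕ} (hpos : ∀ i, 0 < m i)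
    (h : (m 0 : ℝ) * (m 1 : ℝ) ^ p ≤ 2 ^ n) :
    Real.logb 2 (m 0) + p * Real.logb 2 (m 1) ≤ n := by
  have h0 : (0:ℝ) < m 0 := by exact_mod_cast hpos 0
  have h1 : (0:ℝ) < m 1 := by exact_mod_cast hpos 1
  have hle := Real.logb_le_logb_of_le (b := 2) (by norm_num)
    (by positivity) h
  rw [Real.logb_mul (ne_of_gt h0) (ne_of_gt (Real.rpow_pos_of_pos h1 p)), logb_two_pow,
    Real.logb_rpow_eq_mul_logb_of_pos h1] at hle
  linarith

lemma p_mul_logb : p * Real.logb 2 3 = 1 := by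
  have h2 : Real.log 2 ≠ 0 := ne_of_gt (Real.log_pos (by norm_num))
  have h3 : Real.log 3 ≠ 0 := ne_of_gt (Real.log_pos (by norm_num))
  rw [p, Real.logb, Real.logb]
  field_simp

lemma exists_edge {G2 : SimpleGraph (Fin 3)} (h : G2 ≠ ⊥) : ∃ a b, G2.Adj a b := by
  by_contra hno
  push_neg at hno
  exact h (by ext a b; simp [hno a b])

lemma exists_nonedge {G2 : SimpleGraph (Fin 3)} (h : G2 ≠ ⊤) :
    ∃ a b, a ≠ b ∧ ¬G2.Adj a b := by
  by_contra hno
  push_neg at hno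
  apply h
  ext a b
  simp only [SimpleGraph.top_adj]
  exact ⟨fun hadj => G2.ne_of_adj hadj, fun hne => hno a b hne⟩

lemma pigeonhole3 : ∀ u v a b : Fin 3, u ≠ v → ¬(a = u ∨ a = v) → ¬(b = u ∨ b = v) → a = b := by
  decide

lemma kappa_prop {G2 : SimpleGraph (Fin 3)} {u v : Fin 3} (huv : G2.Adj u v) :
    ∀ a b : Fin 3, a ≠ b → ¬G2.Adj a b →
      (fun a => if a = u ∨ a = v then (0:Fin 2) else 1) a
        ≠ (fun a => if a = u ∨ a = v then (0:Fin 2) else 1) b := by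
  intro a b hab hnadj h
  simp only at h
  by_cases ha : a = u ∨ a = v <;> by_cases hb : b = u ∨ b = v
  · rcases ha with rfl | rfl <;> rcases hb with rfl | rfl
    · exact hab rfl
    · exact hnadj huv
    · exact hnadj (G2.adj_symm huv)
    · exact hab rfl
  · rw [if_pos ha, if_neg hb] at h; exact absurd h (by norm_num)
  · rw [if_neg ha, if_pos hb] at h; exact absurd h (by norm_num)
  · exact hab (pigeonhole3 u v a b (G2.ne_of_adj huv) ha hb)

lemma iota2_prop {G2 : SimpleGraph (Fin 3)} {x y : Fin 3} (hxy : x ≠ y) (hnadj : ¬G2.Adj x y) :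
    ∀ a b : Fin 2, a ≠ b → (![x,y] : Fin 2 → Fin 3) a ≠ ![x,y] b ∧
      ¬G2.Adj ((![x,y] : Fin 2 → Fin 3) a) (![x,y] b) := by
  have hyx : ¬G2.Adj y x := fun h => hnadj (G2.adj_symm h)
  intro a b hab
  fin_cases a <;> fin_cases b <;> simp_all <;> tauto

section Main
variable (G : Fin 2 → SimpleGraph (Fin 3))
  (hG1 : ∀ a b : Fin 3, (G 0).Adj a b ↔ (a = 0 ∧ b ≠ 0) ∨ (a ≠ 0 ∧ b = 0))

include hG1 in
lemma main_case (q : ℕ) (hq : 1 ≤ q) (K : ℝ) (hK : 0 < K)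
    (ι : Fin q → Fin 3)
    (hι : ∀ a b : Fin q, a ≠ b → ι a ≠ ι b ∧ ¬(G 1).Adj (ι a) (ι b))
    (hcap : shannonCapacity (G 1) = ((q:ℕ) : ℝ))
    (hKL : K * Real.logb 2 ((q:ℕ) : ℝ) = 1)
    (hbound : ∀ n : ℕ, ∀ m : Fin 2 → ℕ, (∀ i, 0 < m i) → FeasibleAtLength G m n →
      Real.logb 2 (m 0) + K * Real.logb 2 (m 1) ≤ n)
    (α : ℝ) (hα : α ∈ Set.Icc (0 : ℝ) 1) :
    OptimalRate G ![α, (1 - α) * Real.logb 2 (shannonCapacity (G 1))] := by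
  rw [hcap]
  have hkey : K * ((1 - α) * Real.logb 2 ((q:ℕ) : ℝ)) = 1 - α := by
    rw [show K * ((1 - α) * Real.logb 2 ((q:ℕ) : ℝ))
      = (1 - α) * (K * Real.logb 2 ((q:ℕ) : ℝ)) from by ring, hKL, mul_one]
  refine ⟨feas_rate G hG1 q ι hι hq α hα, ?_, ?_⟩
  · rintro ⟨R1', hlt, hfr⟩
    simp only [Matrix.cons_val_zero] at hlt
    have hb := rate_le_one hbound hfr
    simp only [Matrix.cons_val_zero, Matrix.cons_val_one, Matrix.head_cons] at hb
    rw [hkey] at hb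
    linarith
  · rintro ⟨R2', hlt, hfr⟩
    simp only [Matrix.cons_val_one, Matrix.head_cons] at hlt
    have hb := rate_le_one hbound hfr
    simp only [Matrix.cons_val_zero, Matrix.cons_val_one, Matrix.head_cons] at hb
    have h2 : K * ((1 - α) * Real.logb 2 ((q:ℕ) : ℝ)) < K * R2' :=
      mul_lt_mul_of_pos_left hlt hK
    rw [hkey] at h2
    linarith
end Main

end Prop15

/-- Proposition 15: over a three-letter alphabet `{σ₀, σ₁, σ₂}`, if user 1's confusion graph has
edge set `{σ₀σ₁, σ₀σ₂}` (he only distinguishes `σ₁` from `σ₂`) and user 2's graph is any graph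
other than the complete graph, then for every `α ∈ [0,1]` the rate vector
`(α, (1−α) log₂ c(G₂))` is optimal (note `log₂ c(G₁) = 1`). -/
theorem optimal_twoEdges_threeLetters (G : Fin 2 → SimpleGraph (Fin 3))
    (hG1 : ∀ a b : Fin 3, (G 0).Adj a b ↔ (a = 0 ∧ b ≠ 0) ∨ (a ≠ 0 ∧ b = 0))
    (hG2 : G 1 ≠ ⊤)
    (α : ℝ) (hα : α ∈ Set.Icc (0 : ℝ) 1) :
    OptimalRate G ![α, (1 - α) * Real.logb 2 (shannonCapacity (G 1))] := by
  classical
  by_cases hbot : G 1 = ⊥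
  · -- user 2's graph is empty: q = 3
    have hι : ∀ a b : Fin 3, a ≠ b → id a ≠ id b ∧ ¬(G 1).Adj (id a) (id b) := by
      intro a b hab
      refine ⟨hab, ?_⟩
      rw [hbot]
      simp
    have hκ : ∀ a b : Fin 3, a ≠ b → ¬(G 1).Adj a b → (id a : Fin 3) ≠ id b :=
      fun a b hab _ => hab
    have halpha : ∀ n, alphaN (G 1) n = 3 ^ n := Prop15.alphaN_eq id id hκ hι
    have hcap : shannonCapacity (G 1) = ((3:ℕ) : ℝ) :=
      Prop15.shannonCapacity_eq (by norm_num) halpha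
    refine Prop15.main_case G hG1 3 (by norm_num) Prop15.p Prop15.p_pos id hι hcap ?_ ?_ α hα
    · push_cast
      exact Prop15.p_mul_logb
    · intro n m hm hf
      exact Prop15.bound_of_rpow_le hm (Prop15.converse_q3 G hG1 hf)
  · -- user 2's graph has an edge: q = 2
    obtain ⟨u, v, huv⟩ := Prop15.exists_edge hbot
    obtain ⟨x, y, hxy, hnadj⟩ := Prop15.exists_nonedge hG2
    have hι := Prop15.iota2_prop hxy hnadj
    have halpha : ∀ n, alphaN (G 1) n = 2 ^ n :=
      Prop15.alphaN_eq (fun a => if a = u ∨ a = v then (0:Fin 2) else 1) ![x,y]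
        (Prop15.kappa_prop huv) hι
    have hcap : shannonCapacity (G 1) = ((2:ℕ) : ℝ) :=
      Prop15.shannonCapacity_eq (by norm_num) halpha
    refine Prop15.main_case G hG1 2 (by norm_num) 1 (by norm_num) ![x,y] hι hcap ?_ ?_ α hα
    · push_cast
      rw [one_mul, Real.logb_self_eq_one (by norm_num : (1:ℝ) < 2)]
    · intro n m hm hf
      refine Prop15.bound_of_mul_le hm ?_
      have h := Prop15.converse_q2 G hG1 ⟨u, v, huv⟩ hf
      exact_mod_cast h
end

section
/- Let a, b be natural numbers with 2 ≤ b ≤ a and let x_1 ≥ x_2 ≥ ⋯ ≥ x_b ≥ 0 be real numbers. Then (a − b + 1)·a^{log_b x_b} + Σ_{i=1}^{b−1} a^{log_b x_i} ≤ a^{log_b(Σ_{i=1}^{b} x_i)}. -/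
/-- `a^{log_b x}` (that is, `a` raised to the real power `log_b x`), with the convention
`a^{log_b 0} = 0`. -/
noncomputable def alog (a b : ℕ) (x : ℝ) : ℝ :=
  if x = 0 then 0 else (a : ℝ) ^ Real.logb b x

lemma rpow_diff_mono {c : ℝ} (hc : 1 ≤ c) {v t d : ℝ} (hv : 0 ≤ v) (hvt : v ≤ t)
    (hd : 0 ≤ d) : (v + d) ^ c - v ^ c ≤ (t + d) ^ c - t ^ c := by
  rcases eq_or_lt_of_le hd with rfl | hd
  · simp
  rcases eq_or_lt_of_le hvt with rfl | hvt
  · exact le_refl _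
  have ht : (0:ℝ) ≤ t := hv.trans hvt.le
  have hcf := convexOn_rpow hc
  have h1 := hcf.secant_mono (a := v) (x := v + d) (y := t + d)
    (by simpa using hv) (by simp only [Set.mem_Ici]; linarith)
    (by simp only [Set.mem_Ici]; linarith)
    (by intro h; nlinarith) (by intro h; nlinarith) (by linarith)
  have h2 := hcf.secant_mono (a := t + d) (x := v) (y := t)
    (by simp only [Set.mem_Ici]; linarith) (by simpa using hv) (by simpa using ht)
    (by intro h; nlinarith) (by intro h; nlinarith) hvt.le
  rw [show v + d - v = d by ring] at h1
  rw [show (v ^ c - (t + d) ^ c) / (v - (t + d)) = ((t + d) ^ c - v ^ c) / (t + d - v) by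
        rw [← neg_div_neg_eq]; congr 1 <;> ring,
      show (t ^ c - (t + d) ^ c) / (t - (t + d)) = ((t + d) ^ c - t ^ c) / d by
        rw [← neg_div_neg_eq]; congr 1 <;> ring] at h2
  have h := h1.trans h2
  have := mul_le_mul_of_nonneg_right h hd.le
  rwa [div_mul_cancel₀ _ hd.ne', div_mul_cancel₀ _ hd.ne'] at this

lemma rpow_sum_aux {c : ℝ} (hc : 1 ≤ c) (s : Finset ℕ) (y : ℕ → ℝ) (v t : ℝ)
    (hv : 0 ≤ v) (hvt : v ≤ t) :
    (∀ i ∈ s, v ≤ y i) →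
      t ^ c + ∑ i ∈ s, ((y i) ^ c - v ^ c) ≤ (t + ∑ i ∈ s, (y i - v)) ^ c := by
  classical
  induction s using Finset.induction with
  | empty => intro _; simp
  | @insert i s hi ih =>
    intro hy
    have hyi : v ≤ y i := hy i (Finset.mem_insert_self i s)
    have hy' : ∀ j ∈ s, v ≤ y j := fun j hj => hy j (Finset.mem_insert_of_mem hj)
    have hsum : (0:ℝ) ≤ ∑ j ∈ s, (y j - v) :=
      Finset.sum_nonneg fun j hj => by linarith [hy' j hj]
    set T := t + ∑ j ∈ s, (y j - v) with hT
    have hvT : v ≤ T := by linarith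
    have hd := rpow_diff_mono hc hv hvT (sub_nonneg.2 hyi)
    rw [show v + (y i - v) = y i by ring] at hd
    rw [Finset.sum_insert hi, Finset.sum_insert hi]
    have := ih hy'
    calc t ^ c + ((y i) ^ c - v ^ c + ∑ j ∈ s, ((y j) ^ c - v ^ c))
        ≤ T ^ c + ((y i) ^ c - v ^ c) := by linarith
      _ ≤ (T + (y i - v)) ^ c := by linarith
      _ = (t + (y i - v + ∑ j ∈ s, (y j - v))) ^ c := by rw [hT]; congr 1; ring

/-- Lemma 10: for naturals `2 ≤ b ≤ a` and reals `x₁ ≥ x₂ ≥ ⋯ ≥ x_b ≥ 0`,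
`(a−b+1)·a^{log_b x_b} + ∑_{i=1}^{b−1} a^{log_b x_i} ≤ a^{log_b (∑_{i=1}^{b} x_i)}`. -/
theorem alog_sum_le (a b : ℕ) (hb : 2 ≤ b) (hba : b ≤ a) (x : ℕ → ℝ)
    (hanti : ∀ i j : ℕ, 1 ≤ i → i ≤ j → j ≤ b → x j ≤ x i) (hnn : 0 ≤ x b) :
    ((a - b + 1 : ℕ) : ℝ) * alog a b (x b) + ∑ i ∈ Finset.Icc 1 (b - 1), alog a b (x i) ≤
      alog a b (∑ i ∈ Finset.Icc 1 b, x i) := by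
  have hb1 : (1:ℝ) < b := by exact_mod_cast hb.trans_lt' one_lt_two
  have hbR : (2:ℝ) ≤ b := by exact_mod_cast hb
  have haR : (b:ℝ) ≤ a := by exact_mod_cast hba
  have ha0 : (0:ℝ) < a := by linarith
  set c := Real.logb b a with hcdef
  have hc1 : (1:ℝ) ≤ c := by
    rw [hcdef, Real.logb, le_div_iff₀ (Real.log_pos hb1), one_mul]
    exact Real.log_le_log (by linarith) haR
  have hbc : (b:ℝ) ^ c = a := Real.rpow_logb (by linarith) hb1.ne' ha0
  -- alog equals rpow on nonnegative reals
  have key : ∀ z : ℝ, 0 ≤ z → alog a b z = z ^ c := by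
    intro z hz
    rcases eq_or_lt_of_le hz with rfl | hz
    · rw [alog, if_pos rfl, Real.zero_rpow (by linarith)]
    · rw [alog, if_neg hz.ne', Real.rpow_def_of_pos ha0, Real.rpow_def_of_pos hz,
        hcdef, Real.logb, Real.logb]
      congr 1; ring
  have hxnn : ∀ i ∈ Finset.Icc 1 (b - 1), 0 ≤ x i := by
    intro i hi
    rw [Finset.mem_Icc] at hi
    exact hnn.trans (hanti i b hi.1 (by omega) le_rfl)
  have hxb : ∀ i ∈ Finset.Icc 1 (b - 1), x b ≤ x i := by
    intro i hi
    rw [Finset.mem_Icc] at hi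
    exact hanti i b hi.1 (by omega) le_rfl
  have hS : (0:ℝ) ≤ ∑ i ∈ Finset.Icc 1 b, x i := by
    apply Finset.sum_nonneg
    intro i hi
    rw [Finset.mem_Icc] at hi
    exact hnn.trans (hanti i b hi.1 hi.2 le_rfl)
  rw [key _ hnn, key _ hS, Finset.sum_congr rfl fun i hi => key _ (hxnn i hi)]
  -- main inequality via rpow_sum_aux
  have hvt : x b ≤ (b:ℝ) * x b := le_mul_of_one_le_left hnn (by linarith)
  have main := rpow_sum_aux hc1 (Finset.Icc 1 (b - 1)) x (x b) ((b:ℝ) * x b) hnn hvt hxb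
  have hmul : ((b:ℝ) * x b) ^ c = (a:ℝ) * (x b) ^ c := by
    rw [Real.mul_rpow (by linarith) hnn, hbc]
  have hcard : ((Finset.Icc 1 (b - 1)).card : ℝ) = (b:ℝ) - 1 := by
    rw [Nat.card_Icc, show b - 1 + 1 - 1 = b - 1 from by omega,
      Nat.cast_sub (by omega : 1 ≤ b), Nat.cast_one]
  have e1 : ∑ i ∈ Finset.Icc 1 (b - 1), ((x i) ^ c - (x b) ^ c)
      = (∑ i ∈ Finset.Icc 1 (b - 1), (x i) ^ c) - ((b:ℝ) - 1) * (x b) ^ c := by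
    rw [Finset.sum_sub_distrib, Finset.sum_const, nsmul_eq_mul, hcard]
  have hins : Finset.Icc 1 b = insert b (Finset.Icc 1 (b - 1)) := by
    ext j
    simp only [Finset.mem_Icc, Finset.mem_insert]
    omega
  have hsplit : ∑ i ∈ Finset.Icc 1 b, x i = x b + ∑ i ∈ Finset.Icc 1 (b - 1), x i := by
    rw [hins, Finset.sum_insert (by simp only [Finset.mem_Icc]; omega)]
  have e2 : (b:ℝ) * x b + ∑ i ∈ Finset.Icc 1 (b - 1), (x i - x b)
      = ∑ i ∈ Finset.Icc 1 b, x i := by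
    rw [Finset.sum_sub_distrib, Finset.sum_const, nsmul_eq_mul, hcard, hsplit]
    ring
  rw [hmul, e1, e2] at main
  have hcast : ((a - b + 1 : ℕ) : ℝ) = (a:ℝ) - (b:ℝ) + 1 := by
    rw [Nat.cast_add, Nat.cast_sub hba, Nat.cast_one]
  rw [hcast]
  linarith
end

section
/- Let 2 ≤ d ≤ k be natural numbers, let n be a positive integer, and let 𝒢 ⊆ Σ_k^n be a set of strings that is closed under letter replacement: for every g ∈ 𝒢, every coordinate t at which g_t = σ_i with i > d, and every j ∈ {1,…,k}, the string obtained from g by replacing its t-th letter with σ_j also lies in 𝒢. Let 𝒢' = 𝒢 ∩ Σ_d^n. Then either 𝒢 and 𝒢' are both empty, or |𝒢| ≤ k^{log_d |𝒢'|}, i.e. log_k |𝒢| ≤ log_d |𝒢'|. -/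
private lemma claimA {p : ℝ} (hp : 1 ≤ p) {m x s : ℝ} (hm : 0 ≤ m) (hmx : m ≤ x) (hs : 0 ≤ s) :
    x ^ p + (s + m) ^ p ≤ m ^ p + (s + x) ^ p := by
  have hp0 : (0:ℝ) ≤ p := by linarith
  have hder : ∀ t ∈ interior (Set.Ici (0:ℝ)),
      HasDerivAt (fun t : ℝ => (t + s) ^ p - t ^ p) (1 * p * (t+s)^(p-1) - 1 * p * t^(p-1)) t := by
    intro t ht
    rw [interior_Ici] at ht
    have ht0 : (0:ℝ) < t := ht
    have h1 : HasDerivAt (fun t : ℝ => (t + s) ^ p) (1 * p * (t+s)^(p-1)) t :=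
      ((hasDerivAt_id t).add_const s).rpow_const (Or.inl (by positivity))
    have h2 : HasDerivAt (fun t : ℝ => t ^ p) (1 * p * t^(p-1)) t :=
      (hasDerivAt_id t).rpow_const (Or.inl (ne_of_gt ht0))
    exact h1.sub h2
  have hmono : MonotoneOn (fun t : ℝ => (t + s) ^ p - t ^ p) (Set.Ici (0:ℝ)) := by
    apply monotoneOn_of_deriv_nonneg (convex_Ici 0)
    · apply ContinuousOn.sub
      · exact ((continuous_id.add continuous_const).continuousOn).rpow_const
          (fun t ht => Or.inr hp0)
      · exact continuousOn_id.rpow_const (fun t ht => Or.inr hp0)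
    · intro t ht
      exact (hder t ht).differentiableAt.differentiableWithinAt
    · intro t ht
      rw [(hder t ht).deriv]
      have ht0 : (0:ℝ) < t := by rwa [interior_Ici] at ht
      have : t ^ (p-1) ≤ (t+s) ^ (p-1) :=
        Real.rpow_le_rpow ht0.le (by linarith) (by linarith)
      nlinarith
  have := hmono (Set.mem_Ici.2 hm) (Set.mem_Ici.2 (hm.trans hmx)) hmx
  simp only at this
  rw [add_comm s m, add_comm s x]
  linarith

private lemma keyIneq {ι : Type*} [DecidableEq ι] (p m : ℝ) (hp : 1 ≤ p) (hm : 0 ≤ m)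
    (x : ι → ℝ) :
    ∀ (s : Finset ι), (∀ i ∈ s, m ≤ x i) →
      (∑ i ∈ s, (x i ^ p - m ^ p)) + ((s.card : ℝ) * m) ^ p ≤ (∑ i ∈ s, x i) ^ p := by
  intro s
  induction s using Finset.induction_on with
  | empty => intro _; simp [Real.zero_rpow (by linarith : p ≠ 0)]
  | @insert a s' ha ih =>
    intro hx
    have hxa : m ≤ x a := hx a (Finset.mem_insert_self _ _)
    have hxs : ∀ i ∈ s', m ≤ x i := fun i hi => hx i (Finset.mem_insert_of_mem hi)
    have ihs := ih hxs
    have hc0 : (0:ℝ) ≤ (s'.card : ℝ) := Nat.cast_nonneg _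
    have hcmS : (s'.card : ℝ) * m ≤ ∑ i ∈ s', x i := by
      have := Finset.card_nsmul_le_sum s' x m hxs
      simpa [nsmul_eq_mul] using this
    have hcm0 : (0:ℝ) ≤ (s'.card : ℝ) * m := by positivity
    have hxa0 : (0:ℝ) ≤ x a := hm.trans hxa
    have A1 := claimA hp hcm0 hcmS hxa0
    have A2 := claimA hp hm hxa hcm0
    rw [add_comm ((s'.card:ℝ)*m) (x a)] at A2
    rw [Finset.sum_insert ha, Finset.sum_insert ha, Finset.card_insert_of_notMem ha]
    push_cast
    rw [show ((s'.card:ℝ) + 1) * m = (s'.card:ℝ) * m + m by ring]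
    linarith

private lemma main_aux (k d : ℕ) (hd : 2 ≤ d) (hdk : d ≤ k) :
    ∀ (n : ℕ) (𝒢 : Finset (Fin n → Fin k)),
      (∀ g ∈ 𝒢, ∀ t : Fin n, d ≤ (g t).val → ∀ j : Fin k, Function.update g t j ∈ 𝒢) →
      (𝒢.card : ℝ) ≤
        ((𝒢.filter (fun g => ∀ t : Fin n, (g t).val < d)).card : ℝ) ^ Real.logb d k := by
  have hd1 : (1:ℝ) < (d:ℝ) := by exact_mod_cast (by omega : 1 < d)
  have hk0 : (0:ℝ) < (k:ℝ) := by exact_mod_cast (by omega : 0 < k)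
  have hα1 : 1 ≤ Real.logb d k := by
    have := Real.logb_le_logb_of_le hd1 (by positivity : (0:ℝ) < (d:ℝ))
      (by exact_mod_cast hdk : (d:ℝ) ≤ (k:ℝ))
    rwa [Real.logb_self_eq_one hd1] at this
  have hα0 : (0:ℝ) ≤ Real.logb d k := by linarith
  intro n
  induction n with
  | zero =>
    intro 𝒢 _
    rw [Finset.filter_true_of_mem (fun g _ => fun t => t.elim0)]
    rcases Nat.eq_zero_or_pos 𝒢.card with h | h
    · rw [h]; push_cast; positivity
    · have h1 : (1:ℝ) ≤ (𝒢.card : ℝ) := by exact_mod_cast h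
      calc ((𝒢.card : ℝ)) = (𝒢.card:ℝ) ^ (1:ℝ) := (Real.rpow_one _).symm
        _ ≤ (𝒢.card:ℝ) ^ Real.logb d k := Real.rpow_le_rpow_of_exponent_le h1 hα1
  | succ n ih =>
    intro 𝒢 hclosed
    classical
    set Ga : Fin k → Finset (Fin n → Fin k) :=
      fun a => (𝒢.filter (fun g => g 0 = a)).image Fin.tail with hGa
    have hmem : ∀ (a : Fin k) (p : Fin n → Fin k), p ∈ Ga a ↔ Fin.cons a p ∈ 𝒢 := by
      intro a p
      constructor
      · intro hp
        rw [hGa, Finset.mem_image] at hp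
        obtain ⟨g, hg, rfl⟩ := hp
        rw [Finset.mem_filter] at hg
        obtain ⟨hg𝒢, hg0⟩ := hg
        rw [← hg0, Fin.cons_self_tail]
        exact hg𝒢
      · intro h
        rw [hGa, Finset.mem_image]
        exact ⟨Fin.cons a p, Finset.mem_filter.2 ⟨h, by simp⟩, by simp⟩
    have hcard : ∀ a : Fin k, (Ga a).card = (𝒢.filter (fun g => g 0 = a)).card := by
      intro a
      apply Finset.card_image_of_injOn
      intro g1 h1 g2 h2 hteq
      simp only [Finset.coe_filter, Set.mem_setOf_eq] at h1 h2
      have e1 : g1 = Fin.cons a (Fin.tail g1) := by rw [← h1.2, Fin.cons_self_tail]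
      have e2 : g2 = Fin.cons a (Fin.tail g2) := by rw [← h2.2, Fin.cons_self_tail]
      rw [e1, e2, hteq]
    have hsum : 𝒢.card = ∑ a : Fin k, (Ga a).card := by
      rw [Finset.card_eq_sum_card_fiberwise
        (f := fun g : Fin (n+1) → Fin k => g 0) (t := Finset.univ)
        (fun _ _ => Finset.mem_univ _)]
      exact Finset.sum_congr rfl (fun a _ => (hcard a).symm)
    have hcl : ∀ a : Fin k, ∀ p ∈ Ga a, ∀ t : Fin n, d ≤ (p t).val → ∀ j : Fin k,
        Function.update p t j ∈ Ga a := by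
      intro a p hp t ht j
      rw [hmem] at hp ⊢
      have := hclosed _ hp t.succ (by rwa [Fin.cons_succ]) j
      rwa [← Fin.cons_update] at this
    have hsub : ∀ a : Fin k, d ≤ a.val → ∀ b : Fin k, Ga a ⊆ Ga b := by
      intro a ha b p hp
      rw [hmem] at hp ⊢
      have := hclosed _ hp 0 (by rwa [Fin.cons_zero]) b
      rwa [Fin.update_cons_zero] at this
    set y : Fin k → ℕ :=
      fun b => ((Ga b).filter (fun p => ∀ t : Fin n, (p t).val < d)).card with hy
    have hIH : ∀ a : Fin k, ((Ga a).card : ℝ) ≤ (y a : ℝ) ^ Real.logb d k :=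
      fun a => ih (Ga a) (hcl a)
    set s : Finset (Fin k) := Finset.univ.filter (fun b => b.val < d) with hs
    have hscard : s.card = d := by
      have himg : s = Finset.image (Fin.castLE hdk) Finset.univ := by
        ext b
        simp only [hs, Finset.mem_filter, Finset.mem_univ, true_and, Finset.mem_image]
        constructor
        · intro hb; exact ⟨⟨b.val, hb⟩, Fin.ext rfl⟩
        · rintro ⟨c, -, rfl⟩; simpa using c.isLt
      rw [himg, Finset.card_image_of_injective _ (Fin.castLE_injective hdk),
        Finset.card_univ, Fintype.card_fin]
    set G' := 𝒢.filter (fun g => ∀ t : Fin (n+1), (g t).val < d) with hG'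
    have hfib : ∀ b ∈ s, (G'.filter (fun g => g 0 = b)).card = y b := by
      intro b hb
      have hbd : b.val < d := by simpa [hs] using hb
      apply Finset.card_nbij' Fin.tail (Fin.cons b)
      · intro g hg
        rw [Finset.mem_coe, Finset.mem_filter] at hg
        obtain ⟨hg1, hg2⟩ := hg
        rw [hG', Finset.mem_filter] at hg1
        obtain ⟨hg𝒢, hlow⟩ := hg1
        rw [Finset.mem_coe, Finset.mem_filter]
        constructor
        · rw [hmem, ← hg2, Fin.cons_self_tail]; exact hg𝒢
        · intro t; simpa [Fin.tail] using hlow t.succ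
      · intro p hp
        rw [Finset.mem_coe, Finset.mem_filter] at hp
        obtain ⟨hp1, hp2⟩ := hp
        rw [hmem] at hp1
        rw [Finset.mem_coe, Finset.mem_filter]
        refine ⟨Finset.mem_filter.2 ⟨hp1, ?_⟩, by simp⟩
        intro t
        refine Fin.cases ?_ ?_ t
        · simpa using hbd
        · intro i; simpa [Fin.cons_succ] using hp2 i
      · intro g hg
        rw [Finset.mem_coe, Finset.mem_filter] at hg
        rw [← hg.2, Fin.cons_self_tail]
      · intro p hp; exact Fin.tail_cons _ _
    have hG'sum : G'.card = ∑ b ∈ s, y b := by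
      rw [Finset.card_eq_sum_card_fiberwise
        (f := fun g : Fin (n+1) → Fin k => g 0) (t := s) ?_]
      · exact Finset.sum_congr rfl hfib
      · intro g hg
        rw [hG', Finset.mem_coe, Finset.mem_filter] at hg
        simp only [hs, Finset.mem_coe, Finset.mem_filter, Finset.mem_univ, true_and]
        exact hg.2 0
    have hsne : s.Nonempty := ⟨⟨0, by omega⟩, by simp [hs]; omega⟩
    obtain ⟨b₀, hb₀s, hb₀min⟩ := Finset.exists_min_image s y hsne
    have hm0 : (0:ℝ) ≤ (y b₀ : ℝ) := Nat.cast_nonneg _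
    have hhigh : ∀ a : Fin k, a ∉ s → ((Ga a).card : ℝ) ≤ (y b₀ : ℝ) ^ Real.logb d k := by
      intro a ha
      have had : d ≤ a.val := by
        simp only [hs, Finset.mem_filter, Finset.mem_univ, true_and, not_lt] at ha
        exact ha
      refine (hIH a).trans ?_
      apply Real.rpow_le_rpow (Nat.cast_nonneg _) ?_ hα0
      have hss := Finset.filter_subset_filter (fun p => ∀ t : Fin n, (p t).val < d)
        (hsub a had b₀)
      exact_mod_cast Finset.card_le_card hss
    have hkey := keyIneq (Real.logb d k) (y b₀ : ℝ) hα1 hm0 (fun b => (y b : ℝ)) s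
      (fun b hb => by simpa using (Nat.cast_le (α := ℝ)).mpr (hb₀min b hb))
    have hdα : ((d:ℝ)) ^ Real.logb d k = (k : ℝ) :=
      Real.rpow_logb (by positivity) hd1.ne' hk0
    have hmul : ((s.card : ℝ) * (y b₀:ℝ)) ^ Real.logb d k = (k:ℝ) * (y b₀:ℝ) ^ Real.logb d k := by
      rw [hscard, Real.mul_rpow (by positivity) hm0, hdα]
    have hsplit : ∑ a ∈ s, ((y a:ℝ) ^ Real.logb d k)
        = ∑ a ∈ s, ((y a:ℝ) ^ Real.logb d k - (y b₀:ℝ) ^ Real.logb d k)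
          + (d:ℝ) * (y b₀:ℝ) ^ Real.logb d k := by
      rw [Finset.sum_sub_distrib, Finset.sum_const, hscard, nsmul_eq_mul]
      ring
    have hcompl : (sᶜ.card : ℝ) = (k:ℝ) - (d:ℝ) := by
      rw [Finset.card_compl, hscard, Fintype.card_fin]
      push_cast [Nat.cast_sub hdk]
      ring
    have hG'cast : (∑ b ∈ s, (y b : ℝ)) = (G'.card : ℝ) := by
      rw [hG'sum]; push_cast; ring
    calc (𝒢.card : ℝ) = ∑ a : Fin k, ((Ga a).card : ℝ) := by rw [hsum]; push_cast; ring
      _ = ∑ a ∈ s, ((Ga a).card : ℝ) + ∑ a ∈ sᶜ, ((Ga a).card : ℝ) :=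
        (Finset.sum_add_sum_compl s _).symm
      _ ≤ ∑ a ∈ s, (y a : ℝ) ^ Real.logb d k + ∑ a ∈ sᶜ, (y b₀ : ℝ) ^ Real.logb d k := by
        apply add_le_add (Finset.sum_le_sum fun a _ => hIH a)
        exact Finset.sum_le_sum fun a ha => hhigh a (Finset.mem_compl.mp ha)
      _ = ∑ a ∈ s, ((y a:ℝ) ^ Real.logb d k - (y b₀:ℝ) ^ Real.logb d k)
          + ((s.card : ℝ) * (y b₀:ℝ)) ^ Real.logb d k := by
        rw [hsplit, Finset.sum_const, nsmul_eq_mul, hmul, hcompl]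
        ring
      _ ≤ (∑ b ∈ s, (y b : ℝ)) ^ Real.logb d k := hkey
      _ = (G'.card : ℝ) ^ Real.logb d k := by rw [hG'cast]

/-- Lemma 11: letters of `Σ_k` are `0`-indexed, so `σ_i` is `(i − 1 : Fin k)` and
`Σ_d` consists of the letters of value `< d`. If `𝒢 ⊆ Σ_k^n` is closed under replacing any
occurrence of a letter `σ_i` with `i > d` (value `≥ d`) by an arbitrary letter, and
`𝒢' = 𝒢 ∩ Σ_d^n`, then either both are empty or `|𝒢| ≤ k^{log_d |𝒢'|}`. -/
theorem card_le_of_closed_under_replacement (k d n : ℕ) (hd : 2 ≤ d) (hdk : d ≤ k) (hn : 0 < n)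
    (𝒢 : Finset (Fin n → Fin k))
    (hclosed : ∀ g ∈ 𝒢, ∀ t : Fin n, d ≤ (g t).val → ∀ j : Fin k,
      Function.update g t j ∈ 𝒢) :
    (𝒢 = ∅ ∧ 𝒢.filter (fun g => ∀ t : Fin n, (g t).val < d) = ∅) ∨
      ((𝒢.card : ℝ) ≤
        (k : ℝ) ^ Real.logb d ((𝒢.filter (fun g => ∀ t : Fin n, (g t).val < d)).card)) := by
  classical
  rcases eq_or_ne 𝒢 ∅ with h | h
  · exact Or.inl ⟨h, by rw [h]; exact Finset.filter_empty _⟩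
  · right
    have hmain := main_aux k d hd hdk n 𝒢 hclosed
    set G' := 𝒢.filter (fun g => ∀ t : Fin n, (g t).val < d) with hG'
    have hd1 : (1:ℝ) < (d:ℝ) := by exact_mod_cast (by omega : 1 < d)
    have hk0 : (0:ℝ) < (k:ℝ) := by exact_mod_cast (by omega : 0 < k)
    have h1 : (1:ℝ) ≤ (𝒢.card : ℝ) := by
      exact_mod_cast Finset.card_pos.2 (Finset.nonempty_of_ne_empty h)
    have hα1 : 1 ≤ Real.logb d k := by
      have := Real.logb_le_logb_of_le hd1 (by positivity : (0:ℝ) < (d:ℝ))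
        (by exact_mod_cast hdk : (d:ℝ) ≤ (k:ℝ))
      rwa [Real.logb_self_eq_one hd1] at this
    have hG'pos : (0:ℝ) < (G'.card : ℝ) := by
      by_contra h0
      have hz : G'.card = 0 := by
        have : (G'.card : ℝ) ≤ 0 := le_of_not_gt h0
        exact_mod_cast le_antisymm (by exact_mod_cast this) (Nat.zero_le _)
      rw [hz] at hmain
      rw [Nat.cast_zero, Real.zero_rpow (by linarith : Real.logb d k ≠ 0)] at hmain
      linarith
    have hrw : (k:ℝ) ^ Real.logb d (G'.card) = (G'.card : ℝ) ^ Real.logb d k := by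
      conv_lhs => rw [← Real.rpow_logb (by positivity : (0:ℝ) < (d:ℝ)) hd1.ne' hk0]
      rw [← Real.rpow_mul (by positivity), mul_comm,
        Real.rpow_mul (by positivity), Real.rpow_logb (by positivity) hd1.ne' hG'pos]
    rw [hrw]
    exact hmain
end

section
/- Let 2 ≤ d ≤ k be natural numbers with d ≤ (k+1)/2, let n be a positive integer, and let 𝒢 ⊆ Σ_k^n be a set of strings that is closed under letter replacement: for every g ∈ 𝒢, every coordinate t at which g_t = σ_i with i > d, and every j ∈ {1,…,k}, the string obtained from g by replacing its t-th letter with σ_j also lies in 𝒢. Let 𝒢' = 𝒢 ∩ Σ_d^n and let 𝒢'' = { f(g_1)f(g_2)⋯f(g_n) : g ∈ 𝒢 }, where f(σ_i) = σ_{max(i,d)}. Then either 𝒢' and 𝒢'' are both empty, or |𝒢''| ≤ (k − d + 1)^{log_d |𝒢'|}, i.e. log_{k−d+1} |𝒢''| ≤ log_d |𝒢'|. -/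
/-- The map `f(σ_i) = σ_{max(i,d)}`; letters are `0`-indexed, so `σ_i` is `(i − 1 : Fin k)`
and `f` sends the letter of value `v` to the letter of value `max v (d − 1)`. -/
def squash (k d : ℕ) (hdk : d ≤ k) (a : Fin k) : Fin k :=
  ⟨max a.val (d - 1), by have := a.isLt; omega⟩

lemma head_tail_ext {n k : ℕ} {h h' : Fin (n+1) → Fin k} (h0 : h 0 = h' 0)
    (ht : h ∘ Fin.succ = h' ∘ Fin.succ) : h = h' := by
  funext t
  cases t using Fin.cases with
  | zero => exact h0
  | succ i => exact congrFun ht i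

lemma four_point {c x y w : ℝ} (hc : 1 ≤ c) (hy : 0 ≤ y) (hxy : y ≤ x) (hw : 0 ≤ w) :
    (y + w) ^ c + x ^ c ≤ (x + w) ^ c + y ^ c := by
  have hcv := convexOn_rpow hc
  rcases eq_or_lt_of_le (by linarith : y ≤ x + w) with hD | hD
  · have hx : x = y := by linarith
    have hw0 : w = 0 := by linarith
    subst hx; subst hw0; rw [add_zero]
  · set D := x + w - y with hDdef
    have hDpos : 0 < D := by simp only [hDdef]; linarith
    set t := w / D with ht
    set s := (x - y) / D with hs
    have hts : s + t = 1 := by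
      rw [hs, ht, ← add_div, div_eq_one_iff_eq hDpos.ne', hDdef]; ring
    have ht0 : 0 ≤ t := div_nonneg hw hDpos.le
    have hs0 : 0 ≤ s := div_nonneg (by linarith) hDpos.le
    have hmemy : y ∈ Set.Ici (0:ℝ) := hy
    have hmemb : x + w ∈ Set.Ici (0:ℝ) := by simp only [Set.mem_Ici]; linarith
    have h1 := hcv.2 hmemy hmemb hs0 ht0 hts
    have h2 := hcv.2 hmemb hmemy hs0 ht0 hts
    have e1 : s • y + t • (x + w) = y + w := by
      simp only [smul_eq_mul, hs, ht]
      field_simp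
      ring
    have e2 : s • (x + w) + t • y = x := by
      simp only [smul_eq_mul, hs, ht]
      field_simp
      ring
    rw [e1] at h1
    rw [e2] at h2
    simp only [smul_eq_mul] at h1 h2
    have key : s * y ^ c + t * (x + w) ^ c + (s * (x + w) ^ c + t * y ^ c)
        = y ^ c + (x + w) ^ c := by
      have hst : s = 1 - t := by linarith
      rw [hst]; ring
    linarith

lemma rineq {c dr s i : ℝ} (hc : 1 ≤ c) (hdr : 1 ≤ dr) (hi : 0 ≤ i) (his : i ≤ s) :
    s ^ c + (dr ^ c - 1) * i ^ c ≤ (s + (dr - 1) * i) ^ c := by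
  have hw : 0 ≤ (dr - 1) * i := mul_nonneg (by linarith) hi
  have h4 := four_point hc hi his hw
  have e : i + (dr - 1) * i = dr * i := by ring
  rw [e] at h4
  rw [Real.mul_rpow (by linarith) hi] at h4
  linarith

lemma card_filter_val_lt (k m : ℕ) (hmk : m ≤ k) :
    (Finset.univ.filter (fun b : Fin k => b.val < m)).card = m := by
  have h1 : (Finset.univ.filter (fun b : Fin k => b.val < m)).image Fin.val
      = Finset.range m := by
    ext j
    simp only [Finset.mem_image, Finset.mem_filter, Finset.mem_univ, true_and, Finset.mem_range]
    constructor
    · rintro ⟨b, hb, rfl⟩; exact hb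
    · intro hj; exact ⟨⟨j, lt_of_lt_of_le hj hmk⟩, hj, rfl⟩
  have h2 := Finset.card_image_of_injective
    (Finset.univ.filter (fun b : Fin k => b.val < m)) Fin.val_injective
  rw [← h2, h1, Finset.card_range]

lemma sum_card_ge {α ι : Type*} [DecidableEq α] (A : Finset ι) (F : ι → Finset α) (J : Finset α)
    (hA : A.Nonempty) (hJ : ∀ a ∈ A, J ⊆ F a) :
    (A.biUnion F).card + (A.card - 1) * J.card ≤ ∑ a ∈ A, (F a).card := by
  have h1 : ∀ a ∈ A, (F a).card = J.card + (F a \ J).card := by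
    intro a ha
    rw [Finset.card_sdiff_of_subset (hJ a ha)]
    have := Finset.card_le_card (hJ a ha)
    omega
  rw [Finset.sum_congr rfl h1, Finset.sum_add_distrib, Finset.sum_const, smul_eq_mul]
  have h2 : A.biUnion (fun a => F a \ J) = A.biUnion F \ J := by
    ext x; simp only [Finset.mem_biUnion, Finset.mem_sdiff]; tauto
  have h3 : (A.biUnion F \ J).card ≤ ∑ a ∈ A, (F a \ J).card := by
    rw [← h2]; exact Finset.card_biUnion_le
  have hJU : J ⊆ A.biUnion F := by
    obtain ⟨a, ha⟩ := hA
    exact (hJ a ha).trans (Finset.subset_biUnion_of_mem F ha)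
  have h4 : (A.biUnion F \ J).card = (A.biUnion F).card - J.card := Finset.card_sdiff_of_subset hJU
  have h5 := Finset.card_le_card hJU
  obtain ⟨m, hm⟩ : ∃ m, A.card = m + 1 := ⟨A.card - 1, by have := Finset.card_pos.2 hA; omega⟩
  rw [hm]
  have e1 : (m + 1 - 1) * J.card = m * J.card := by simp
  have e2 : (m + 1) * J.card = m * J.card + J.card := by ring
  omega

lemma main_ind (k d : ℕ) (hd : 2 ≤ d) (hdk : d ≤ k) (c : ℝ) (hc : 1 ≤ c)
    (hdc : (d : ℝ) ^ c = ((k - d + 1 : ℕ) : ℝ)) :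
    ∀ n (𝒢 : Finset (Fin n → Fin k)),
      (∀ g ∈ 𝒢, ∀ t : Fin n, d ≤ (g t).val → ∀ j : Fin k, Function.update g t j ∈ 𝒢) →
      ((𝒢.image (fun g => squash k d hdk ∘ g)).card : ℝ) ≤
        ((𝒢.filter (fun g => ∀ t : Fin n, (g t).val < d)).card : ℝ) ^ c := by
  have dpos : 0 < d := lt_of_lt_of_le two_pos hd
  intro n
  induction n with
  | zero =>
    intro 𝒢 _
    have hfilter : 𝒢.filter (fun g => ∀ t : Fin 0, (g t).val < d) = 𝒢 :=
      Finset.filter_true_of_mem (fun g _ => fun t => t.elim0)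
    rw [hfilter]
    have hle : (𝒢.image (fun g => squash k d hdk ∘ g)).card ≤ 𝒢.card :=
      Finset.card_image_le
    rcases Nat.eq_zero_or_pos 𝒢.card with h0 | hpos
    · have himg : (𝒢.image (fun g => squash k d hdk ∘ g)).card = 0 :=
        Nat.le_zero.1 (le_trans hle (Nat.le_of_eq h0))
      rw [himg, h0, Nat.cast_zero, Real.zero_rpow (by positivity : c ≠ 0)]
    · have h1 : (1 : ℝ) ≤ (𝒢.card : ℝ) := by exact_mod_cast hpos
      calc ((𝒢.image (fun g => squash k d hdk ∘ g)).card : ℝ) ≤ (𝒢.card : ℝ) := by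
            exact_mod_cast hle
        _ = (𝒢.card : ℝ) ^ (1 : ℝ) := (Real.rpow_one _).symm
        _ ≤ (𝒢.card : ℝ) ^ c := Real.rpow_le_rpow_of_exponent_le h1 hc
  | succ n ih =>
    intro 𝒢 hclosed
    have h0k : 0 < k := lt_of_lt_of_le dpos hdk
    have hd1k : d - 1 < k := lt_of_lt_of_le (Nat.sub_lt dpos one_pos) hdk
    -- slices
    set S : Finset (Fin n → Fin k) :=
      (𝒢.filter (fun g => (g 0).val < d)).image (fun g => g ∘ Fin.succ) with hSdef
    set I : Finset (Fin n → Fin k) :=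
      (𝒢.filter (fun g => d ≤ (g 0).val)).image (fun g => g ∘ Fin.succ) with hIdef
    -- closure of slices
    have hSc : ∀ g' ∈ S, ∀ t : Fin n, d ≤ (g' t).val → ∀ j : Fin k,
        Function.update g' t j ∈ S := by
      intro g' hg' t ht j
      rw [hSdef, Finset.mem_image] at hg' ⊢
      obtain ⟨g, hg, rfl⟩ := hg'
      rw [Finset.mem_filter] at hg
      refine ⟨Function.update g t.succ j, Finset.mem_filter.2
        ⟨hclosed g hg.1 t.succ ht j, ?_⟩, ?_⟩
      · rw [Function.update_of_ne (Fin.succ_ne_zero t).symm]; exact hg.2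
      · exact Function.update_comp_eq_of_injective g (Fin.succ_injective n) t j
    have hIc : ∀ g' ∈ I, ∀ t : Fin n, d ≤ (g' t).val → ∀ j : Fin k,
        Function.update g' t j ∈ I := by
      intro g' hg' t ht j
      rw [hIdef, Finset.mem_image] at hg' ⊢
      obtain ⟨g, hg, rfl⟩ := hg'
      rw [Finset.mem_filter] at hg
      refine ⟨Function.update g t.succ j, Finset.mem_filter.2
        ⟨hclosed g hg.1 t.succ ht j, ?_⟩, ?_⟩
      · rw [Function.update_of_ne (Fin.succ_ne_zero t).symm]; exact hg.2
      · exact Function.update_comp_eq_of_injective g (Fin.succ_injective n) t j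
    -- from a member of I, the head can be replaced by anything
    have hIany : ∀ g' ∈ I, ∀ a : Fin k, ∃ g ∈ 𝒢, g 0 = a ∧ g ∘ Fin.succ = g' := by
      intro g' hg' a
      rw [hIdef, Finset.mem_image] at hg'
      obtain ⟨g, hg, rfl⟩ := hg'
      rw [Finset.mem_filter] at hg
      refine ⟨Function.update g 0 a, hclosed g hg.1 0 hg.2 a, by simp, ?_⟩
      funext x
      exact Function.update_of_ne (Fin.succ_ne_zero x) a g
    -- abbreviations
    set s2 := (S.image (fun g => squash k d hdk ∘ g)).card with hs2def
    set i2 := (I.image (fun g => squash k d hdk ∘ g)).card with hi2def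
    set s1 := (S.filter (fun g => ∀ t : Fin n, (g t).val < d)).card with hs1def
    set i1 := (I.filter (fun g => ∀ t : Fin n, (g t).val < d)).card with hi1def
    have hindS : (s2 : ℝ) ≤ (s1 : ℝ) ^ c := ih S hSc
    have hindI : (i2 : ℝ) ≤ (i1 : ℝ) ^ c := ih I hIc
    -- (1): counting the image fiberwise over the head
    have h1 : (𝒢.image (fun g => squash k d hdk ∘ g)).card ≤ s2 + (k - d) * i2 := by
      have hbound : ∀ b : Fin k,
          (((𝒢.image (fun g => squash k d hdk ∘ g)).filter (fun h => h 0 = b)).card)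
            ≤ (if b.val < d - 1 then 0 else if b.val = d - 1 then s2 else i2) := by
        intro b
        by_cases hb1 : b.val < d - 1
        · rw [if_pos hb1, Nat.le_zero, Finset.card_eq_zero, Finset.filter_eq_empty_iff]
          intro h hh
          rw [Finset.mem_image] at hh
          obtain ⟨g, _, rfl⟩ := hh
          intro hcontra
          have hval : ((squash k d hdk ∘ g) 0).val = max (g 0).val (d - 1) := rfl
          rw [hcontra] at hval
          rw [hval] at hb1
          exact Nat.not_lt.2 (le_max_right (g 0).val (d - 1)) hb1
        · rw [if_neg hb1]
          by_cases hb2 : b.val = d - 1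
          · rw [if_pos hb2, hs2def]
            apply Finset.card_le_card_of_injOn (fun h => h ∘ Fin.succ)
            · intro h hh
              rw [Finset.mem_coe, Finset.mem_filter, Finset.mem_image] at hh
              obtain ⟨⟨g, hg, rfl⟩, hheadb⟩ := hh
              rw [Finset.mem_coe, Finset.mem_image]
              refine ⟨g ∘ Fin.succ, ?_, rfl⟩
              rw [hSdef, Finset.mem_image]
              refine ⟨g, Finset.mem_filter.2 ⟨hg, ?_⟩, rfl⟩
              have hval : ((squash k d hdk ∘ g) 0).val = max (g 0).val (d - 1) := rfl
              rw [hheadb, hb2] at hval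
              have hle1 : (g 0).val ≤ d - 1 := by
                have hmax := le_max_left (g 0).val (d - 1)
                rw [← hval] at hmax
                exact hmax
              exact lt_of_le_of_lt hle1 (Nat.sub_lt dpos one_pos)
            · intro h hh h' hh' hT
              rw [Finset.coe_filter, Set.mem_setOf_eq] at hh hh'
              exact head_tail_ext (hh.2.trans hh'.2.symm) hT
          · rw [if_neg hb2]
            have hbd : d ≤ b.val := by
              have hlt : d - 1 < b.val := lt_of_le_of_ne (Nat.le_of_not_lt hb1)
                (fun hEq => hb2 hEq.symm)
              have hd' : d - 1 + 1 = d := Nat.succ_pred_eq_of_pos dpos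
              exact hd' ▸ Nat.succ_le_of_lt hlt
            rw [hi2def]
            apply Finset.card_le_card_of_injOn (fun h => h ∘ Fin.succ)
            · intro h hh
              rw [Finset.mem_coe, Finset.mem_filter, Finset.mem_image] at hh
              obtain ⟨⟨g, hg, rfl⟩, hheadb⟩ := hh
              rw [Finset.mem_coe, Finset.mem_image]
              refine ⟨g ∘ Fin.succ, ?_, rfl⟩
              rw [hIdef, Finset.mem_image]
              refine ⟨g, Finset.mem_filter.2 ⟨hg, ?_⟩, rfl⟩
              have hval : ((squash k d hdk ∘ g) 0).val = max (g 0).val (d - 1) := rfl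
              rw [hheadb] at hval
              rcases max_choice (g 0).val (d - 1) with hm | hm
              · rw [hm] at hval
                exact hval ▸ hbd
              · rw [hm] at hval
                exact absurd hval hb2
            · intro h hh h' hh' hT
              rw [Finset.coe_filter, Set.mem_setOf_eq] at hh hh'
              exact head_tail_ext (hh.2.trans hh'.2.symm) hT
      have hfib := Finset.card_eq_sum_card_fiberwise
        (f := fun h : Fin (n+1) → Fin k => h 0)
        (s := 𝒢.image (fun g => squash k d hdk ∘ g)) (t := Finset.univ)
        (fun x _ => Finset.mem_univ _)
      rw [hfib]
      clear hfib
      calc ∑ b : Fin k,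
            ((𝒢.image (fun g => squash k d hdk ∘ g)).filter (fun h => h 0 = b)).card
          ≤ ∑ b : Fin k,
            (if b.val < d - 1 then 0 else if b.val = d - 1 then s2 else i2) :=
            Finset.sum_le_sum (fun b _ => hbound b)
        _ = ∑ j ∈ Finset.range k,
            (if j < d - 1 then 0 else if j = d - 1 then s2 else i2) :=
            Fin.sum_univ_eq_sum_range
              (fun j => if j < d - 1 then 0 else if j = d - 1 then s2 else i2) k
        _ = s2 + (k - d) * i2 := by
            rw [Finset.range_eq_Ico,
              ← Finset.sum_Ico_consecutive _ (Nat.zero_le (d-1)) (le_of_lt hd1k)]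
            have hz : ∑ j ∈ Finset.Ico 0 (d-1),
                (if j < d - 1 then 0 else if j = d - 1 then s2 else i2) = 0 := by
              apply Finset.sum_eq_zero
              intro j hj
              rw [Finset.mem_Ico] at hj
              simp only [if_pos hj.2]
            rw [hz, zero_add, Finset.sum_eq_sum_Ico_succ_bot hd1k]
            have e1 : (if d - 1 < d - 1 then 0 else if d - 1 = d - 1 then s2 else i2)
                = s2 := by simp
            rw [e1]
            have e2 : d - 1 + 1 = d := Nat.succ_pred_eq_of_pos dpos
            rw [e2]
            have e3 : ∑ j ∈ Finset.Ico d k,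
                (if j < d - 1 then 0 else if j = d - 1 then s2 else i2)
                = (k - d) * i2 := by
              rw [Finset.sum_congr rfl (fun j hj => ?_), Finset.sum_const, Nat.card_Ico,
                smul_eq_mul]
              rw [Finset.mem_Ico] at hj
              have hne : ¬ (j < d - 1) := Nat.not_lt.2 (le_trans (Nat.sub_le d 1) hj.1)
              rw [if_neg hne,
                if_neg (ne_of_gt (lt_of_lt_of_le (Nat.sub_lt dpos one_pos) hj.1))]
            rw [e3]
    -- (2): lower bound for the all-low part
    set A := Finset.univ.filter (fun a : Fin k => a.val < d) with hAdef
    have hAcard : A.card = d := card_filter_val_lt k d hdk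
    have hAne : A.Nonempty := Finset.card_pos.1 (by rw [hAcard]; exact dpos)
    set G1 := 𝒢.filter (fun g => ∀ t : Fin (n+1), (g t).val < d) with hG1def
    set fib : Fin k → Finset (Fin (n+1) → Fin k) :=
      fun a => G1.filter (fun g => g 0 = a) with hfibdef
    set T : Fin k → Finset (Fin n → Fin k) :=
      fun a => (fib a).image (fun g => g ∘ Fin.succ) with hTdef
    have hfibT : ∀ a : Fin k, (T a).card = (fib a).card := by
      intro a
      simp only [hTdef]
      apply Finset.card_image_of_injOn
      intro h hh h' hh' hT
      simp only [hfibdef, Finset.coe_filter, Set.mem_setOf_eq] at hh hh'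
      exact head_tail_ext (hh.2.trans hh'.2.symm) hT
    have hJsub : ∀ a ∈ A, I.filter (fun g => ∀ t : Fin n, (g t).val < d) ⊆ T a := by
      intro a ha g' hg'
      rw [Finset.mem_filter] at hg'
      rw [hAdef, Finset.mem_filter] at ha
      obtain ⟨g, hg, hg0, htail⟩ := hIany g' hg'.1 a
      simp only [hTdef, Finset.mem_image]
      refine ⟨g, ?_, htail⟩
      simp only [hfibdef, Finset.mem_filter]
      refine ⟨Finset.mem_filter.2 ⟨hg, ?_⟩, hg0⟩
      intro t
      cases t using Fin.cases with
      | zero => rw [hg0]; exact ha.2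
      | succ i =>
        have hgi : g i.succ = g' i := congrFun htail i
        rw [hgi]; exact hg'.2 i
    have hSsub : S.filter (fun g => ∀ t : Fin n, (g t).val < d) ⊆ A.biUnion T := by
      intro g' hg'
      rw [Finset.mem_filter] at hg'
      obtain ⟨hg'S, hg'low⟩ := hg'
      rw [hSdef, Finset.mem_image] at hg'S
      obtain ⟨g, hg, rfl⟩ := hg'S
      rw [Finset.mem_filter] at hg
      rw [Finset.mem_biUnion]
      have hgA : g 0 ∈ A := by
        rw [hAdef]
        simp only [Finset.mem_filter, Finset.mem_univ, true_and]
        exact hg.2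
      refine ⟨g 0, hgA, ?_⟩
      simp only [hTdef, Finset.mem_image]
      refine ⟨g, ?_, rfl⟩
      simp only [hfibdef, Finset.mem_filter]
      refine ⟨Finset.mem_filter.2 ⟨hg.1, ?_⟩, trivial⟩
      intro t
      cases t using Fin.cases with
      | zero => exact hg.2
      | succ i => exact hg'low i
    have h2 : s1 + (d - 1) * i1 ≤ G1.card := by
      have hkey := sum_card_ge A T (I.filter (fun g => ∀ t : Fin n, (g t).val < d)) hAne hJsub
      rw [hAcard] at hkey
      have hs1le : s1 ≤ (A.biUnion T).card := Finset.card_le_card hSsub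
      have hsum_eq : ∑ a ∈ A, (T a).card = ∑ a ∈ A, (fib a).card :=
        Finset.sum_congr rfl (fun a _ => hfibT a)
      have hsumle : ∑ a ∈ A, (fib a).card ≤ G1.card := by
        have hfibtotal := Finset.card_eq_sum_card_fiberwise
          (f := fun g : Fin (n+1) → Fin k => g 0) (s := G1) (t := Finset.univ)
          (fun x _ => Finset.mem_univ _)
        rw [hfibtotal]
        exact Finset.sum_le_sum_of_subset (Finset.subset_univ A)
      calc s1 + (d - 1) * i1 ≤ (A.biUnion T).card + (d - 1) * i1 :=
            Nat.add_le_add_right hs1le _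
        _ ≤ ∑ a ∈ A, (T a).card := hkey
        _ = ∑ a ∈ A, (fib a).card := hsum_eq
        _ ≤ G1.card := hsumle
    -- (3)
    have h3 : i1 ≤ s1 := by
      apply Finset.card_le_card
      intro g' hg'
      rw [Finset.mem_filter] at hg' ⊢
      refine ⟨?_, hg'.2⟩
      obtain ⟨g, hg, hg0, htail⟩ := hIany g' hg'.1 ⟨0, h0k⟩
      rw [hSdef, Finset.mem_image]
      refine ⟨g, Finset.mem_filter.2 ⟨hg, ?_⟩, htail⟩
      rw [hg0]
      exact dpos
    -- combine everything over ℝ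
    have hd1 : 1 ≤ d := le_trans one_le_two hd
    have hd1R : (1:ℝ) ≤ (d:ℝ) := by exact_mod_cast hd1
    have hkdR : (0:ℝ) ≤ (k:ℝ) - (d:ℝ) := by
      have hcast : (d:ℝ) ≤ (k:ℝ) := by exact_mod_cast hdk
      linarith
    have hdc' : (k:ℝ) - (d:ℝ) = (d:ℝ) ^ c - 1 := by
      have h := hdc
      push_cast [Nat.cast_sub hdk] at h
      linarith
    calc ((𝒢.image (fun g => squash k d hdk ∘ g)).card : ℝ)
        ≤ (s2 : ℝ) + ((k:ℝ) - (d:ℝ)) * (i2 : ℝ) := by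
          have h1' := (Nat.cast_le (α := ℝ)).2 h1
          push_cast [Nat.cast_sub hdk] at h1'
          linarith
      _ ≤ (s1 : ℝ) ^ c + ((k:ℝ) - (d:ℝ)) * (i1 : ℝ) ^ c :=
          add_le_add hindS (mul_le_mul_of_nonneg_left hindI hkdR)
      _ = (s1 : ℝ) ^ c + ((d:ℝ) ^ c - 1) * (i1 : ℝ) ^ c := by rw [hdc']
      _ ≤ ((s1 : ℝ) + ((d:ℝ) - 1) * (i1 : ℝ)) ^ c :=
          rineq hc hd1R (Nat.cast_nonneg _) (by exact_mod_cast h3)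
      _ ≤ ((G1.card : ℝ)) ^ c := by
          apply Real.rpow_le_rpow ?_ ?_ (by linarith)
          · have hnn : (0:ℝ) ≤ ((d:ℝ) - 1) * (i1 : ℝ) :=
              mul_nonneg (by linarith) (Nat.cast_nonneg _)
            have hnn2 : (0:ℝ) ≤ (s1 : ℝ) := Nat.cast_nonneg _
            linarith
          · have h2' := (Nat.cast_le (α := ℝ)).2 h2
            push_cast [Nat.cast_sub hd1] at h2'
            linarith

lemma exists_low (k d n : ℕ) (dpos : 0 < d) (hdk : d ≤ k) (𝒢 : Finset (Fin n → Fin k))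
    (hclosed : ∀ g ∈ 𝒢, ∀ t : Fin n, d ≤ (g t).val → ∀ j : Fin k,
      Function.update g t j ∈ 𝒢) :
    ∀ m : ℕ, ∀ g ∈ 𝒢, (Finset.univ.filter (fun t => d ≤ (g t).val)).card ≤ m →
      ∃ g₀ ∈ 𝒢, ∀ t : Fin n, (g₀ t).val < d := by
  intro m
  induction m with
  | zero =>
    intro g hg hcard
    refine ⟨g, hg, fun t => ?_⟩
    by_contra hlt
    push_neg at hlt
    have ht : t ∈ Finset.univ.filter (fun t => d ≤ (g t).val) :=
      Finset.mem_filter.2 ⟨Finset.mem_univ t, hlt⟩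
    have hpos := Finset.card_pos.2 ⟨t, ht⟩
    exact Nat.lt_irrefl 0 (lt_of_lt_of_le hpos hcard)
  | succ m ihm =>
    intro g hg hcard
    by_cases hall : ∀ t : Fin n, (g t).val < d
    · exact ⟨g, hg, hall⟩
    · push_neg at hall
      obtain ⟨t, ht⟩ := hall
      have hg' : Function.update g t ⟨0, lt_of_lt_of_le dpos hdk⟩ ∈ 𝒢 :=
        hclosed g hg t ht _
      apply ihm _ hg'
      have hsub : Finset.univ.filter
            (fun t' => d ≤ ((Function.update g t ⟨0, lt_of_lt_of_le dpos hdk⟩) t').val) ⊆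
          (Finset.univ.filter (fun t' => d ≤ (g t').val)).erase t := by
        intro x hx
        rw [Finset.mem_filter] at hx
        rw [Finset.mem_erase, Finset.mem_filter]
        have hxt : x ≠ t := by
          intro hEq
          subst hEq
          rw [Function.update_self] at hx
          exact Nat.not_le.2 dpos hx.2
        refine ⟨hxt, Finset.mem_univ x, ?_⟩
        rw [Function.update_of_ne hxt] at hx
        exact hx.2
      have hle := Finset.card_le_card hsub
      have hmem : t ∈ Finset.univ.filter (fun t' => d ≤ (g t').val) :=
        Finset.mem_filter.2 ⟨Finset.mem_univ t, ht⟩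
      have herase := Finset.card_erase_of_mem hmem
      calc (Finset.univ.filter
            (fun t' => d ≤ ((Function.update g t ⟨0, lt_of_lt_of_le dpos hdk⟩) t').val)).card
          ≤ (Finset.univ.filter (fun t' => d ≤ (g t').val)).card - 1 := herase ▸ hle
        _ ≤ (m + 1) - 1 := Nat.sub_le_sub_right hcard 1
        _ = m := rfl

/-- Lemma 12: letters of `Σ_k` are `0`-indexed, so `Σ_d` consists of the letters of value `< d`.
Let `2 ≤ d ≤ (k+1)/2`, let `𝒢 ⊆ Σ_k^n` be closed under replacing any occurrence of a letter
`σ_i` with `i > d` (value `≥ d`) by an arbitrary letter, let `𝒢' = 𝒢 ∩ Σ_d^n` and let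
`𝒢'' = {f ∘ g : g ∈ 𝒢}` where `f(σ_i) = σ_{max(i,d)}`. Then either `𝒢'` and `𝒢''` are both
empty or `|𝒢''| ≤ (k−d+1)^{log_d |𝒢'|}`. -/
theorem card_image_squash_le (k d n : ℕ) (hd : 2 ≤ d) (hdk : d ≤ k) (hhalf : 2 * d ≤ k + 1)
    (hn : 0 < n) (𝒢 : Finset (Fin n → Fin k))
    (hclosed : ∀ g ∈ 𝒢, ∀ t : Fin n, d ≤ (g t).val → ∀ j : Fin k,
      Function.update g t j ∈ 𝒢) :
    (𝒢.filter (fun g => ∀ t : Fin n, (g t).val < d) = ∅ ∧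
        𝒢.image (fun g => squash k d hdk ∘ g) = ∅) ∨
      (((𝒢.image (fun g => squash k d hdk ∘ g)).card : ℝ) ≤
        ((k - d + 1 : ℕ) : ℝ) ^
          Real.logb d ((𝒢.filter (fun g => ∀ t : Fin n, (g t).val < d)).card)) := by
  rcases Finset.eq_empty_or_nonempty 𝒢 with hempty | ⟨g, hg⟩
  · left
    subst hempty
    simp
  · right
    have dpos : 0 < d := lt_of_lt_of_le two_pos hd
    have hdkd : d ≤ k - d + 1 := by omega
    obtain ⟨g₀, hg₀, hlow⟩ := exists_low k d n dpos hdk 𝒢 hclosed _ g hg le_rfl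
    have hG1pos : 0 < (𝒢.filter (fun g => ∀ t : Fin n, (g t).val < d)).card :=
      Finset.card_pos.2 ⟨g₀, Finset.mem_filter.2 ⟨hg₀, hlow⟩⟩
    have hG1posR : (0:ℝ) < ((𝒢.filter (fun g => ∀ t : Fin n, (g t).val < d)).card : ℝ) := by
      exact_mod_cast hG1pos
    have hKpos : (0:ℝ) < ((k - d + 1 : ℕ) : ℝ) := by
      have : 0 < k - d + 1 := Nat.succ_pos _
      exact_mod_cast this
    have hd1R : (1:ℝ) < (d:ℝ) := by exact_mod_cast lt_of_lt_of_le one_lt_two hd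
    have hKge : (d:ℝ) ≤ ((k - d + 1 : ℕ) : ℝ) := by exact_mod_cast hdkd
    have hc : 1 ≤ Real.logb d ((k - d + 1 : ℕ) : ℝ) := by
      rw [← Real.logb_self_eq_one hd1R]
      exact Real.logb_le_logb_of_le hd1R (by linarith) hKge
    have hdc : (d:ℝ) ^ Real.logb d ((k - d + 1 : ℕ) : ℝ) = ((k - d + 1 : ℕ) : ℝ) :=
      Real.rpow_logb (by linarith) hd1R.ne' hKpos
    have main := main_ind k d hd hdk _ hc hdc n 𝒢 hclosed
    have hswap : ((k - d + 1 : ℕ) : ℝ) ^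
          Real.logb d ((𝒢.filter (fun g => ∀ t : Fin n, (g t).val < d)).card : ℝ)
        = ((𝒢.filter (fun g => ∀ t : Fin n, (g t).val < d)).card : ℝ) ^
          Real.logb d ((k - d + 1 : ℕ) : ℝ) := by
      rw [Real.rpow_def_of_pos hKpos, Real.rpow_def_of_pos hG1posR, Real.logb, Real.logb]
      congr 1
      ring
    rw [hswap]
    exact main
end

section
/- Let Σ = {σ_0, σ_1, σ_2} be an alphabet of three letters, let G_1 be the graph on Σ whose only edge is σ_0σ_1, and let G_2 be the graph on Σ whose only edge is σ_0σ_2. Then for every positive integer n, the vector (2^n, 2) is not feasible at length n: there is no encoding map E from {1,…,2^n} × {1,2} to Σ^n such that user 1 can always recover the first component and user 2 the second. -/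
/-- Over a three-letter alphabet `{σ₀, σ₁, σ₂}` where user 1's confusion graph has the single
edge `σ₀σ₁` and user 2's the single edge `σ₀σ₂`, the vector `(2^n, 2)` is not feasible at
length `n` for any positive `n`. -/
theorem not_feasibleAtLength_pow_two (G : Fin 2 → SimpleGraph (Fin 3))
    (hG1 : ∀ a b : Fin 3, (G 0).Adj a b ↔ (a = 0 ∧ b = 1) ∨ (a = 1 ∧ b = 0))
    (hG2 : ∀ a b : Fin 3, (G 1).Adj a b ↔ (a = 0 ∧ b = 2) ∨ (a = 2 ∧ b = 0))
    (n : ℕ) (hn : 0 < n) :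
    ¬ FeasibleAtLength G ![2 ^ n, 2] n := by
  rintro ⟨E, hE⟩
  set msg : Fin (2 ^ n) → Fin 2 → (∀ i : Fin 2, Fin (![2 ^ n, 2] i)) :=
    fun a j => Fin.cons a (Fin.cons j finZeroElim) with hmsg
  have key : ∀ u v : Fin 3, u ≠ v → ¬((u = 0 ∧ v = 1) ∨ (u = 1 ∧ v = 0)) →
      decide (u = 2) ≠ decide (v = 2) := by decide
  set F : Fin (2 ^ n) → Fin 2 → (Fin n → Bool) :=
    fun a j t => decide (E (msg a j) t = 2) with hF
  have P1 : ∀ a a' : Fin (2 ^ n), ∀ j j' : Fin 2, a ≠ a' → F a j ≠ F a' j' := by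
    intro a a' j j' ha hFeq
    obtain ⟨t, ht1, ht2⟩ := hE 0 (msg a j) (msg a' j') (by exact ha)
    rw [hG1] at ht2
    exact key _ _ ht1 ht2 (congrFun hFeq t)
  have hinj : Function.Injective (fun a => F a 0) := by
    intro a a' h
    by_contra hne
    exact P1 a a' 0 0 hne h
  have hbij : Function.Bijective (fun a => F a 0) := by
    rw [Fintype.bijective_iff_injective_and_card]
    exact ⟨hinj, by simp⟩
  obtain ⟨a, ha⟩ := hbij.2 (fun _ => true)
  obtain ⟨a'', ha''⟩ := hbij.2 (F a 1)
  have haa : a'' = a := by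
    by_contra h
    exact P1 a a'' 1 0 (Ne.symm h) ha''.symm
  subst haa
  have h2 : F a'' 1 = fun _ => true := ha''.symm.trans ha
  have hall : ∀ t, E (msg a'' 0) t = 2 ∧ E (msg a'' 1) t = 2 := by
    intro t
    refine ⟨of_decide_eq_true (congrFun ha t), of_decide_eq_true (congrFun h2 t)⟩
  obtain ⟨t, ht1, -⟩ := hE 1 (msg a'' 0) (msg a'' 1) (by exact (zero_ne_one : (0 : Fin 2) ≠ 1))
  exact ht1 ((hall t).1.trans (hall t).2.symm)
end
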